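/- arXiv:1408.4409 — 9 statements merged into one kernel-verified Lean document; each statement's English description precedes it below -/
import Mathlib

section
/- Let (H, A, ‖·‖♯) be a CS space with bound L over 𝔽 ∈ {ℝ, ℂ}, and let Φ : H → 𝔽^M be a linear map. Suppose Φ satisfies the (ρ,α)-robust width property over B♯ with 0 < ρ ≤ 1/(4L) and α > 0. Then for every x♮ ∈ H, every ε ≥ 0, every e ∈ 𝔽^M with ‖e‖₂ ≤ ε, every a ∈ A, and every x⋆ ∈ H such that ‖Φx⋆ − (Φx♮ + e)‖₂ ≤ ε and ‖x⋆‖♯ ≤ ‖x‖♯ for all x ∈ H with ‖Φx − (Φx♮ + e)‖₂ ≤ ε, one has ‖x⋆ − x♮‖₂ ≤ 4ρ‖x♮ − a‖♯ + (2/α)ε. -/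
/-- If `(H, A, ‖·‖♯)` is a CS space with bound `L` and
`Φ : H → 𝔽^M` satisfies the `(ρ,α)`-robust width property over `B♯` with
`0 < ρ ≤ 1/(4L)` and `α > 0`, then any `♯`-minimizer subject to the noisy
measurement constraint satisfies
`‖x⋆ − x♮‖₂ ≤ 4ρ‖x♮ − a‖♯ + (2/α)ε` for every `a ∈ A`. -/
theorem stmt0 {𝕜 H : Type*} [RCLike 𝕜] [NormedAddCommGroup H] [InnerProductSpace 𝕜 H]
    [FiniteDimensional 𝕜 H] {M : ℕ}
    (sharp : H → ℝ)
    (sharp_add : ∀ x y : H, sharp (x + y) ≤ sharp x + sharp y)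
    (sharp_smul : ∀ (c : 𝕜) (x : H), sharp (c • x) = ‖c‖ * sharp x)
    (sharp_def : ∀ x : H, sharp x = 0 → x = 0)
    (A : Set H) (hA0 : (0 : H) ∈ A)
    (L : ℝ) (hL : 0 < L)
    (hdecomp : ∀ a ∈ A, ∀ z : H, ∃ z₁ z₂ : H, z = z₁ + z₂ ∧
      sharp (a + z₁) = sharp a + sharp z₁ ∧ sharp z₂ ≤ L * ‖z‖)
    (Φ : H →ₗ[𝕜] EuclideanSpace 𝕜 (Fin M))
    (ρ α : ℝ) (hρ : 0 < ρ) (hρL : ρ ≤ 1 / (4 * L)) (hα : 0 < α)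
    (hRWP : ∀ x : H, ‖Φ x‖ < α * ‖x‖ → ‖x‖ ≤ ρ * sharp x) :
    ∀ (xnat : H) (ε : ℝ), 0 ≤ ε → ∀ e : EuclideanSpace 𝕜 (Fin M), ‖e‖ ≤ ε →
      ∀ a ∈ A, ∀ xstar : H,
        ‖Φ xstar - (Φ xnat + e)‖ ≤ ε →
        (∀ x : H, ‖Φ x - (Φ xnat + e)‖ ≤ ε → sharp xstar ≤ sharp x) →
        ‖xstar - xnat‖ ≤ 4 * ρ * sharp (xnat - a) + (2 / α) * ε := by

  have sharp_zero : sharp (0:H) = 0 := by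
    have h := sharp_smul (0:𝕜) 0
    simpa using h
  have sharp_neg : ∀ x : H, sharp (-x) = sharp x := by
    intro x
    have h := sharp_smul (-1 : 𝕜) x
    simpa using h
  have sharp_nonneg : ∀ x : H, 0 ≤ sharp x := by
    intro x
    have h := sharp_add x (-x)
    simp [sharp_zero, sharp_neg] at h
    linarith
  have hρL4 : ρ * L ≤ 1/4 := by
    rw [le_div_iff₀ (by positivity)] at hρL
    linarith
  intro xnat ε hε e he a ha xstar hfeas hmin
  set z := xstar - xnat with hz
  by_cases hcase : ‖Φ z‖ < α * ‖z‖
  · have hrw := hRWP z hcase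
    obtain ⟨z₁, z₂, hzsum, hdec, hz₂⟩ := hdecomp a ha z
    have hxmin : sharp xstar ≤ sharp xnat := by
      apply hmin
      simpa using he
    have h1 : sharp xnat ≤ sharp a + sharp (xnat - a) := by
      have h := sharp_add a (xnat - a)
      simpa using h
    have h2 : sharp z ≤ sharp z₁ + sharp z₂ := by
      rw [hzsum]; exact sharp_add _ _
    have h4 : sharp (a + z₁) ≤ sharp xstar + sharp (xnat - a) + sharp z₂ := by
      have e1 : a + z₁ = xstar + (-(xnat - a)) + (-z₂) := by
        have : z = z₁ + z₂ := hzsum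
        rw [hz] at this
        abel_nf
        abel_nf at this
        linear_combination (norm := abel) -this
      calc sharp (a + z₁) ≤ sharp (xstar + (-(xnat - a))) + sharp (-z₂) := by
            rw [e1]; exact sharp_add _ _
        _ ≤ sharp xstar + sharp (-(xnat - a)) + sharp (-z₂) := by
            have := sharp_add xstar (-(xnat - a)); linarith
        _ = sharp xstar + sharp (xnat - a) + sharp z₂ := by
            rw [sharp_neg, sharp_neg]
    have key : sharp z ≤ 2 * sharp (xnat - a) + 2 * sharp z₂ := by
      have := hdec
      linarith
    have hz2 : sharp z₂ ≤ L * ‖z‖ := hz₂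
    have hnz : ‖z‖ ≤ 4 * ρ * sharp (xnat - a) := by
      nlinarith [hrw, sharp_nonneg (xnat - a), norm_nonneg z,
        mul_le_mul_of_nonneg_left key hρ.le,
        mul_le_mul_of_nonneg_left hz2 hρ.le]
    have : 0 ≤ (2/α) * ε := by positivity
    linarith
  · push_neg at hcase
    have hΦz : ‖Φ z‖ ≤ 2 * ε := by
      have e1 : Φ z = (Φ xstar - (Φ xnat + e)) + e := by
        simp [hz, map_sub]; abel
      calc ‖Φ z‖ ≤ ‖Φ xstar - (Φ xnat + e)‖ + ‖e‖ := by
            rw [e1]; exact norm_add_le _ _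
        _ ≤ 2 * ε := by linarith
    have hnz : ‖z‖ ≤ (2/α) * ε := by
      rw [div_mul_eq_mul_div, le_div_iff₀ hα]
      nlinarith
    have h0 : 0 ≤ 4 * ρ * sharp (xnat - a) := by
      have := sharp_nonneg (xnat - a)
      positivity
    linarith
end

section
/- Let H be a finite-dimensional real or complex Hilbert space with inner-product norm ‖·‖₂, let ‖·‖♯ be a norm on H, let A ⊆ H contain 0, and let Φ : H → 𝔽^M be a linear map (𝔽 ∈ {ℝ, ℂ}). Suppose there exist constants C₀, C₁ > 0 such that for every x♮ ∈ H, every ε ≥ 0, every e ∈ 𝔽^M with ‖e‖₂ ≤ ε, and every x⋆ ∈ H satisfying ‖Φx⋆ − (Φx♮ + e)‖₂ ≤ ε and ‖x⋆‖♯ ≤ ‖x‖♯ for all x with ‖Φx − (Φx♮ + e)‖₂ ≤ ε, one has ‖x⋆ − x♮‖₂ ≤ C₀‖x♮ − a‖♯ + C₁ε for every a ∈ A. Then Φ satisfies the (2C₀, 1/(2C₁))-robust width property over B♯. -/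
/-- If the decoder `Δ_{♯,Φ,ε}` satisfies the uniform guarantee
`‖x⋆ − x♮‖₂ ≤ C₀‖x♮ − a‖♯ + C₁ε` for all `x♮, ε, e, a ∈ A` and all minimizers `x⋆`,
then `Φ` satisfies the `(2C₀, 1/(2C₁))`-robust width property over `B♯`. -/
theorem stmt1 {𝕜 H : Type*} [RCLike 𝕜] [NormedAddCommGroup H] [InnerProductSpace 𝕜 H]
    [FiniteDimensional 𝕜 H] {M : ℕ}
    (sharp : H → ℝ)
    (sharp_add : ∀ x y : H, sharp (x + y) ≤ sharp x + sharp y)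
    (sharp_smul : ∀ (c : 𝕜) (x : H), sharp (c • x) = ‖c‖ * sharp x)
    (sharp_def : ∀ x : H, sharp x = 0 → x = 0)
    (A : Set H) (hA0 : (0 : H) ∈ A)
    (Φ : H →ₗ[𝕜] EuclideanSpace 𝕜 (Fin M))
    (C₀ C₁ : ℝ) (hC₀ : 0 < C₀) (hC₁ : 0 < C₁)
    (hguarantee : ∀ (xnat : H) (ε : ℝ), 0 ≤ ε →
      ∀ e : EuclideanSpace 𝕜 (Fin M), ‖e‖ ≤ ε →
      ∀ xstar : H,
        ‖Φ xstar - (Φ xnat + e)‖ ≤ ε →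
        (∀ x : H, ‖Φ x - (Φ xnat + e)‖ ≤ ε → sharp xstar ≤ sharp x) →
        ∀ a ∈ A, ‖xstar - xnat‖ ≤ C₀ * sharp (xnat - a) + C₁ * ε) :
    ∀ x : H, ‖Φ x‖ < (1 / (2 * C₁)) * ‖x‖ → ‖x‖ ≤ 2 * C₀ * sharp x := by
  intro x hx
  have hsharp0 : sharp 0 = 0 := by simpa using sharp_smul 0 0
  have hnonneg : ∀ y : H, 0 ≤ sharp y := by
    intro y
    have h1 := sharp_add y (-y)
    have h2 : sharp (-y) = sharp y := by simpa using sharp_smul (-1) y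
    rw [add_neg_cancel, hsharp0, h2] at h1
    linarith
  have key := hguarantee x ‖Φ x‖ (norm_nonneg _) (-(Φ x)) (by simp) 0
    (by simp) (fun y _ => hsharp0 ▸ hnonneg y) 0 hA0
  simp only [zero_sub, sub_zero, norm_neg] at key
  have h3 : C₁ * ‖Φ x‖ < ‖x‖ / 2 := by
    have := mul_lt_mul_of_pos_left hx hC₁
    rw [show C₁ * (1 / (2 * C₁) * ‖x‖) = ‖x‖ / 2 by field_simp] at this
    linarith
  linarith
end

section
/- Let 𝔽 ∈ {ℝ, ℂ}, let w₁, …, w_N > 0, let W be the N×N diagonal matrix with diagonal entries w_i, and for x ∈ 𝔽^N set S_W(x) := Σ_{i ∈ supp(x)} w_i² and ‖x‖♯ := ‖Wx‖₁ = Σᵢ wᵢ|xᵢ|. Let K > 0 and Σ_{W,K} := {x ∈ 𝔽^N : S_W(x) ≤ K}. Then for every a ∈ Σ_{W,K} and every z ∈ 𝔽^N there exist z₁, z₂ with z = z₁ + z₂, ⟨z₁, z₂⟩ = 0, ‖W(a + z₁)‖₁ = ‖Wa‖₁ + ‖Wz₁‖₁, and ‖Wz₂‖₁ ≤ √K‖z‖₂;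 that is, (𝔽^N, Σ_{W,K}, ‖W·‖₁) is a CS space with bound √K. -/
open scoped Classical

/-- Weighted sparsity: `(𝔽^N, Σ_{W,K}, ‖W·‖₁)` is a CS space with
bound `√K`, via an orthogonal decomposition. -/
theorem stmt3 {𝕜 : Type*} [RCLike 𝕜] {N : ℕ}
    (w : Fin N → ℝ) (hw : ∀ i, 0 < w i) (K : ℝ) (hK : 0 < K) :
    ∀ a : EuclideanSpace 𝕜 (Fin N),
      (∑ i ∈ Finset.univ.filter fun i => a i ≠ 0, w i ^ 2) ≤ K →
      ∀ z : EuclideanSpace 𝕜 (Fin N),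
        ∃ z₁ z₂ : EuclideanSpace 𝕜 (Fin N), z = z₁ + z₂ ∧
          inner 𝕜 z₁ z₂ = (0 : 𝕜) ∧
          (∑ i, w i * ‖a i + z₁ i‖) = (∑ i, w i * ‖a i‖) + (∑ i, w i * ‖z₁ i‖) ∧
          (∑ i, w i * ‖z₂ i‖) ≤ Real.sqrt K * ‖z‖ := by
  intro a ha z
  set S : Finset (Fin N) := Finset.univ.filter fun i => a i ≠ 0 with hS
  refine ⟨(WithLp.toLp 2 (fun i => if a i = 0 then z i else 0) : EuclideanSpace 𝕜 (Fin N)),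
    (WithLp.toLp 2 (fun i => if a i = 0 then 0 else z i) : EuclideanSpace 𝕜 (Fin N)), ?_, ?_, ?_, ?_⟩
  · ext i
    by_cases h : a i = 0 <;> simp [h, PiLp.add_apply]
  · rw [PiLp.inner_apply]
    apply Finset.sum_eq_zero
    intro i _
    by_cases h : a i = 0 <;> simp [h]
  · rw [← Finset.sum_add_distrib]
    apply Finset.sum_congr rfl
    intro i _
    by_cases h : a i = 0 <;> simp [h, mul_add]
  · have h1 : (∑ i, w i * ‖(if a i = 0 then (0:𝕜) else z i)‖)
        = ∑ i ∈ S, w i * ‖z i‖ := by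
      rw [← Finset.sum_filter_add_sum_filter_not Finset.univ (fun i => a i ≠ 0)]
      have : ∀ i ∈ Finset.univ.filter fun i => ¬ a i ≠ 0,
          w i * ‖(if a i = 0 then (0:𝕜) else z i)‖ = 0 := by
        intro i hi
        simp only [Finset.mem_filter, not_not] at hi
        simp [hi.2]
      rw [Finset.sum_eq_zero this, add_zero]
      apply Finset.sum_congr rfl
      intro i hi
      simp only [Finset.mem_filter] at hi
      simp [hi.2]
    rw [h1]
    have hcs : (∑ i ∈ S, w i * ‖z i‖) ^ 2
        ≤ (∑ i ∈ S, w i ^ 2) * (∑ i ∈ S, ‖z i‖ ^ 2) :=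
      Finset.sum_mul_sq_le_sq_mul_sq S w (fun i => ‖z i‖)
    have hz2 : (∑ i ∈ S, ‖z i‖ ^ 2) ≤ ‖z‖ ^ 2 := by
      have hz : ‖z‖ ^ 2 = ∑ i, ‖z i‖ ^ 2 := by
        rw [EuclideanSpace.norm_eq, Real.sq_sqrt (Finset.sum_nonneg fun i _ => by positivity)]
      rw [hz]
      exact Finset.sum_le_sum_of_subset_of_nonneg (Finset.subset_univ S)
        (fun i _ _ => by positivity)
    have hnn : 0 ≤ ∑ i ∈ S, w i * ‖z i‖ :=
      Finset.sum_nonneg fun i _ => mul_nonneg (hw i).le (norm_nonneg _)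
    have hKz : (∑ i ∈ S, w i * ‖z i‖) ^ 2 ≤ K * ‖z‖ ^ 2 := by
      calc (∑ i ∈ S, w i * ‖z i‖) ^ 2
          ≤ (∑ i ∈ S, w i ^ 2) * (∑ i ∈ S, ‖z i‖ ^ 2) := hcs
        _ ≤ K * ‖z‖ ^ 2 := by
            apply mul_le_mul ha hz2 (Finset.sum_nonneg fun i _ => by positivity) hK.le
    have := Real.sqrt_le_sqrt hKz
    rwa [Real.sqrt_sq hnn, Real.sqrt_mul hK.le, Real.sqrt_sq (norm_nonneg z)] at this
end

section
/- Let {H_j}_{j∈J} be a finite family of finite-dimensional real or complex Hilbert spaces and let H = ⊕_{j∈J} H_j be their Hilbert-space direct sum, with x_j denoting the component of x in H_j. Set ‖x‖♯ := Σ_{j∈J} ‖x_j‖₂ and call x K-block sparse if at most K of the components x_j are nonzero. Then for every K-block sparse a ∈ H and every z ∈ H there exist z₁, z₂ ∈ H with z = z₁ + z₂, ⟨z₁, z₂⟩ = 0, ‖a + z₁‖♯ = ‖a‖♯ + ‖z₁‖♯, and ‖z₂‖♯ ≤ √K‖z‖₂; that is, (H, {K-block sparse vectors}, ‖·‖♯)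 is a CS space with bound √K. -/
/-- Block sparsity: with `H = ⊕_{j∈J} H_j` (Hilbert direct sum),
`‖x‖♯ = Σ_j ‖x_j‖₂`, and `A` the `K`-block sparse vectors, `(H, A, ‖·‖♯)` is a
CS space with bound `√K`, via an orthogonal decomposition. -/
theorem stmt4 {𝕜 : Type*} [RCLike 𝕜] {J : Type*} [Fintype J]
    (Hs : J → Type*) [∀ j, NormedAddCommGroup (Hs j)] [∀ j, InnerProductSpace 𝕜 (Hs j)]
    [∀ j, FiniteDimensional 𝕜 (Hs j)] (K : ℕ) :
    ∀ a : PiLp 2 Hs, {j | a j ≠ 0}.ncard ≤ K →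
      ∀ z : PiLp 2 Hs,
        ∃ z₁ z₂ : PiLp 2 Hs, z = z₁ + z₂ ∧
          inner 𝕜 z₁ z₂ = (0 : 𝕜) ∧
          (∑ j, ‖a j + z₁ j‖) = (∑ j, ‖a j‖) + (∑ j, ‖z₁ j‖) ∧
          (∑ j, ‖z₂ j‖) ≤ Real.sqrt K * ‖z‖ := by
  intro a ha z
  classical
  refine ⟨WithLp.toLp 2 (fun j => if a j = 0 then z j else 0 : ∀ j, Hs j),
          WithLp.toLp 2 (fun j => if a j = 0 then 0 else z j : ∀ j, Hs j), ?_, ?_, ?_, ?_⟩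
  · ext j
    by_cases h : a j = 0 <;> simp [PiLp.add_apply, h]
  · rw [PiLp.inner_apply]
    refine Finset.sum_eq_zero fun j _ => ?_
    by_cases h : a j = 0 <;> simp [h]
  · rw [← Finset.sum_add_distrib]
    refine Finset.sum_congr rfl fun j _ => ?_
    by_cases h : a j = 0 <;> simp [h]
  · set s : Finset J := Finset.univ.filter (fun j => a j ≠ 0) with hs
    have hcard : s.card ≤ K := by
      have : {j | a j ≠ 0}.ncard = s.card := by
        rw [Set.ncard_eq_toFinset_card']
        congr 1
        ext j
        simp [hs]
      omega
    have h1 : (∑ j, ‖(if a j = 0 then 0 else z j : Hs j)‖) = ∑ j ∈ s, ‖z j‖ := by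
      rw [hs, Finset.sum_filter]
      refine Finset.sum_congr rfl fun j _ => ?_
      by_cases h : a j = 0 <;> simp [h]
    rw [h1]
    have hcs : (∑ j ∈ s, ‖z j‖) ^ 2 ≤ (s.card : ℝ) * ∑ j ∈ s, ‖z j‖ ^ 2 :=
      sq_sum_le_card_mul_sum_sq
    have hnn : (0 : ℝ) ≤ ∑ j ∈ s, ‖z j‖ := Finset.sum_nonneg fun j _ => norm_nonneg _
    have step : (∑ j ∈ s, ‖z j‖) ≤ Real.sqrt ((s.card : ℝ) * ∑ j ∈ s, ‖z j‖ ^ 2) := by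
      rw [Real.le_sqrt hnn]
      · exact hcs
      · positivity
    refine step.trans ?_
    rw [Real.sqrt_mul (by positivity)]
    apply mul_le_mul
    · exact Real.sqrt_le_sqrt (by exact_mod_cast hcard)
    · rw [PiLp.norm_eq_of_L2]
      apply Real.sqrt_le_sqrt
      exact Finset.sum_le_sum_of_subset_of_nonneg (Finset.subset_univ s)
        (fun j _ _ => sq_nonneg _)
    · exact Real.sqrt_nonneg _
    · exact Real.sqrt_nonneg _
end

section
/- Let 𝔽 ∈ {ℝ, ℂ}, let K ≥ 0, and let A be an m×n matrix over 𝔽 with rank(A) ≤ K. Then for every m×n matrix Z over 𝔽 there exist m×n matrices Z₁, Z₂ such that Z = Z₁ + Z₂, Tr(Z₁Z₂*) = 0 (i.e., Z₁ and Z₂ are orthogonal in the Frobenius inner product), AZ₁* = 0, A*Z₁ = 0, and rank(Z₂) ≤ 2K. -/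
open Matrix

section aux

variable {𝕜 : Type*} [RCLike 𝕜]

lemma toE_mul {m n p : ℕ} (X : Matrix (Fin m) (Fin n) 𝕜) (Y : Matrix (Fin n) (Fin p) 𝕜) :
    Matrix.toEuclideanLin (X * Y) =
      (Matrix.toEuclideanLin X) ∘ₗ (Matrix.toEuclideanLin Y) := by
  ext v
  simp [Matrix.toEuclideanLin_apply, Matrix.mulVec_mulVec]

lemma matrix_rank_add_le {m n : ℕ} (X Y : Matrix (Fin m) (Fin n) 𝕜) :
    (X + Y).rank ≤ X.rank + Y.rank := by
  rw [Matrix.rank, Matrix.rank, Matrix.rank, Matrix.mulVecLin_add]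
  refine le_trans (Submodule.finrank_mono ?_) (Submodule.finrank_add_le_finrank_add_finrank _ _)
  intro x hx
  obtain ⟨v, rfl⟩ := hx
  exact Submodule.add_mem_sup (LinearMap.mem_range_self _ v) (LinearMap.mem_range_self _ v)

lemma exists_proj {m n : ℕ} (B : Matrix (Fin m) (Fin n) 𝕜) :
    ∃ P : Matrix (Fin m) (Fin m) 𝕜,
      P * P = P ∧ Pᴴ = P ∧ P * B = B ∧ P.rank = B.rank := by
  set U : Submodule 𝕜 (EuclideanSpace 𝕜 (Fin m)) :=
    LinearMap.range (Matrix.toEuclideanLin B) with hU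
  let π : EuclideanSpace 𝕜 (Fin m) →ₗ[𝕜] EuclideanSpace 𝕜 (Fin m) :=
    U.subtype ∘ₗ (U.orthogonalProjectionOnto : _ →L[𝕜] U)
  have hπ : ∀ x, π x = (U.orthogonalProjectionOnto x : EuclideanSpace 𝕜 (Fin m)) := fun x => rfl
  have hπmem : ∀ x, π x ∈ U := fun x => (U.orthogonalProjectionOnto x).2
  have hπfix : ∀ x ∈ U, π x = x := fun x hx => by
    rw [hπ]; exact U.starProjection_eq_self_iff.mpr hx
  have happ : Matrix.toEuclideanLin (Matrix.toEuclideanLin.symm π) = π :=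
    Matrix.toEuclideanLin.apply_symm_apply π
  refine ⟨Matrix.toEuclideanLin.symm π, ?_, ?_, ?_, ?_⟩
  · apply Matrix.toEuclideanLin.injective
    rw [toE_mul, happ]
    refine LinearMap.ext fun x => ?_
    exact hπfix _ (hπmem x)
  · rw [← Matrix.IsHermitian]
    rw [Matrix.isHermitian_iff_isSymmetric, happ]
    intro x y
    simp only [hπ]
    exact U.inner_starProjection_left_eq_right x y
  · apply Matrix.toEuclideanLin.injective
    rw [toE_mul, happ]
    refine LinearMap.ext fun x => ?_
    exact hπfix _ ⟨x, rfl⟩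
  · rw [Matrix.rank_eq_finrank_range_toLin _ (PiLp.basisFun 2 𝕜 (Fin m)) (PiLp.basisFun 2 𝕜 (Fin m)),
      Matrix.rank_eq_finrank_range_toLin B (PiLp.basisFun 2 𝕜 (Fin m)) (PiLp.basisFun 2 𝕜 (Fin n)),
      ← Matrix.toEuclideanLin_eq_toLin, ← Matrix.toEuclideanLin_eq_toLin, happ, ← hU]
    have hrange : LinearMap.range π = U := by
      apply le_antisymm
      · rintro x ⟨v, rfl⟩; exact hπmem v
      · intro x hx; exact ⟨x, hπfix x hx⟩
    rw [hrange]

end aux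

/-- The Recht–Fazel–Parrilo decomposition: if `rank A ≤ K`, then every
matrix `Z` decomposes as `Z = Z₁ + Z₂` with `Tr(Z₁ Z₂*) = 0`, `A Z₁* = 0`, `A* Z₁ = 0`,
and `rank Z₂ ≤ 2K`. -/
theorem stmt7 {𝕜 : Type*} [RCLike 𝕜] {m n : ℕ} (K : ℕ)
    (A : Matrix (Fin m) (Fin n) 𝕜) (hA : A.rank ≤ K) :
    ∀ Z : Matrix (Fin m) (Fin n) 𝕜, ∃ Z₁ Z₂ : Matrix (Fin m) (Fin n) 𝕜,
      Z = Z₁ + Z₂ ∧ (Z₁ * Z₂ᴴ).trace = 0 ∧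
      A * Z₁ᴴ = 0 ∧ Aᴴ * Z₁ = 0 ∧ Z₂.rank ≤ 2 * K := by
  obtain ⟨P, hP2, hPH, hPA, hPrank⟩ := exists_proj A
  obtain ⟨Q, hQ2, hQH, hQA, hQrank⟩ := exists_proj Aᴴ
  have hAQ : A * Q = A := by
    have := congrArg conjTranspose hQA
    simpa [conjTranspose_mul, hQH] using this
  have hAP : Aᴴ * P = Aᴴ := by
    have := congrArg conjTranspose hPA
    simpa [conjTranspose_mul, hPH] using this
  intro Z
  set Z₁ : Matrix (Fin m) (Fin n) 𝕜 := (1 - P) * Z * (1 - Q) with hZ₁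
  have hZ₁H : Z₁ᴴ = (1 - Q) * Zᴴ * (1 - P) := by
    simp [hZ₁, conjTranspose_mul, conjTranspose_sub, hPH, hQH, Matrix.mul_assoc]
  have hZ₂ : Z - Z₁ = P * Z + (1 - P) * Z * Q := by
    rw [hZ₁]; simp only [Matrix.sub_mul, Matrix.mul_sub, Matrix.one_mul, Matrix.mul_one, Matrix.mul_assoc]; abel
  refine ⟨Z₁, Z - Z₁, by abel, ?_, ?_, ?_, ?_⟩
  · rw [hZ₂]
    have hcT : (P * Z + (1 - P) * Z * Q)ᴴ = Zᴴ * P + Q * Zᴴ * (1 - P) := by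
      simp [conjTranspose_mul, conjTranspose_add, conjTranspose_sub, hPH, hQH, Matrix.mul_assoc]
    rw [hcT, Matrix.mul_add, trace_add]
    have e1 : (Zᴴ * P) * Z₁ = Zᴴ * ((P - P * P) * (Z * (1 - Q))) := by
      rw [hZ₁]; simp only [Matrix.sub_mul, Matrix.mul_sub, Matrix.one_mul, Matrix.mul_one, Matrix.mul_assoc]
    have e2 : Z₁ * (Q * Zᴴ * (1 - P)) = ((1 - P) * Z) * ((Q - Q * Q) * (Zᴴ * (1 - P))) := by
      rw [hZ₁]; simp only [Matrix.sub_mul, Matrix.mul_sub, Matrix.one_mul, Matrix.mul_one, Matrix.mul_assoc]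
    rw [trace_mul_comm, e1, e2, hP2, hQ2]
    simp
  · have e : A * Z₁ᴴ = (A - A * Q) * (Zᴴ * (1 - P)) := by
      rw [hZ₁H]; simp only [Matrix.sub_mul, Matrix.mul_sub, Matrix.one_mul, Matrix.mul_one, Matrix.mul_assoc]
    rw [e, hAQ, sub_self, Matrix.zero_mul]
  · have e : Aᴴ * Z₁ = (Aᴴ - Aᴴ * P) * (Z * (1 - Q)) := by
      rw [hZ₁]; simp only [Matrix.sub_mul, Matrix.mul_sub, Matrix.one_mul, Matrix.mul_one, Matrix.mul_assoc]
    rw [e, hAP, sub_self, Matrix.zero_mul]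
  · rw [hZ₂]
    calc (P * Z + (1 - P) * Z * Q).rank
        ≤ (P * Z).rank + ((1 - P) * Z * Q).rank := matrix_rank_add_le _ _
      _ ≤ P.rank + Q.rank :=
          add_le_add (Matrix.rank_mul_le_left _ _) (Matrix.rank_mul_le_right _ _)
      _ ≤ 2 * K := by
          letI := RCLike.toPartialOrder (K := 𝕜)
          letI := RCLike.toStarOrderedRing (K := 𝕜)
          rw [hPrank, hQrank, Matrix.rank_conjTranspose]
          omega
end

section
/- Let X, Y be subspaces of ℝ^N with dim X = dim Y ≥ 1. Then min over x ∈ X with ‖x‖₂ = 1 of (max over y ∈ Y with ‖y‖₂ = 1 of ⟨x, y⟩) equals √(1 − d(X, Y)²). -/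
/-- The gap metric between two subspaces: the operator norm of the difference of the
orthogonal projections onto them. -/
noncomputable def gapMetric {N : ℕ} (X Y : Submodule ℝ (EuclideanSpace ℝ (Fin N))) : ℝ :=
  ‖X.subtypeL.comp X.orthogonalProjectionOnto - Y.subtypeL.comp Y.orthogonalProjectionOnto‖




variable {N : ℕ}

local notation "E" => EuclideanSpace ℝ (Fin N)

noncomputable def pj (K : Submodule ℝ (EuclideanSpace ℝ (Fin N))) :
    EuclideanSpace ℝ (Fin N) →L[ℝ] EuclideanSpace ℝ (Fin N) :=
  K.subtypeL.comp K.orthogonalProjectionOnto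

lemma pj_mem (K : Submodule ℝ (EuclideanSpace ℝ (Fin N))) (z : E) : pj K z ∈ K :=
  (K.orthogonalProjectionOnto z).2

lemma pj_eq_self (K : Submodule ℝ (EuclideanSpace ℝ (Fin N))) {x : E} (hx : x ∈ K) :
    pj K x = x := Submodule.starProjection_eq_self_iff.mpr hx

lemma pj_inner_sub (K : Submodule ℝ (EuclideanSpace ℝ (Fin N))) (z : E) {y : E} (hy : y ∈ K) :
    (inner ℝ (z - pj K z) y : ℝ) = 0 := by
  have h := Submodule.sub_starProjection_mem_orthogonal (K := K) z
  have := (Submodule.mem_orthogonal K (z - pj K z)).mp h y hy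
  rwa [real_inner_comm]

lemma pj_pythagoras (K : Submodule ℝ (EuclideanSpace ℝ (Fin N))) (z : E) :
    ‖pj K z‖ ^ 2 + ‖z - pj K z‖ ^ 2 = ‖z‖ ^ 2 := by
  have h : (inner ℝ (pj K z) (z - pj K z) : ℝ) = 0 := by
    rw [real_inner_comm]; exact pj_inner_sub K z (pj_mem K z)
  have := norm_add_sq_real (pj K z) (z - pj K z)
  simp only [h, mul_zero, add_zero] at this
  simpa [add_sub_cancel] using this.symm

lemma pj_norm_le (K : Submodule ℝ (EuclideanSpace ℝ (Fin N))) (z : E) : ‖pj K z‖ ≤ ‖z‖ := by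
  have h := pj_pythagoras K z
  nlinarith [norm_nonneg (pj K z), norm_nonneg z, sq_nonneg ‖z - pj K z‖]

lemma pj_adjoint (K : Submodule ℝ (EuclideanSpace ℝ (Fin N))) :
    ContinuousLinearMap.adjoint (pj K) = pj K := by
  show ContinuousLinearMap.adjoint (K.subtypeL ∘L K.orthogonalProjectionOnto) = _
  rw [ContinuousLinearMap.adjoint_comp, Submodule.adjoint_subtypeL,
    Submodule.adjoint_orthogonalProjectionOnto]
  rfl

lemma pj_zero_of_orth (K : Submodule ℝ (EuclideanSpace ℝ (Fin N))) {w : E} (hw : w ∈ Kᗮ) :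
    pj K w = 0 := by
  have := Submodule.orthogonalProjectionOnto_apply_of_mem_orthogonal hw
  simp [pj, this]

lemma sphere_compact (K : Submodule ℝ (EuclideanSpace ℝ (Fin N))) :
    IsCompact {x : E | x ∈ K ∧ ‖x‖ = 1} := by
  have h1 : {x : E | x ∈ K ∧ ‖x‖ = 1} = (K : Set E) ∩ Metric.sphere 0 1 := by
    ext x; simp [Set.mem_inter_iff, mem_sphere_iff_norm]
  rw [h1]
  exact ((isCompact_sphere (0 : E) 1).inter_left K.closed_of_finiteDimensional)

lemma sphere_nonempty' {K : Submodule ℝ (EuclideanSpace ℝ (Fin N))}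
    (h : 1 ≤ Module.finrank ℝ K) : ∃ x : E, x ∈ K ∧ ‖x‖ = 1 := by
  have hbot : K ≠ ⊥ := by
    intro hb
    rw [hb, finrank_bot] at h; omega
  obtain ⟨x, hxK, hx0⟩ := Submodule.exists_mem_ne_zero_of_ne_bot hbot
  refine ⟨‖x‖⁻¹ • x, K.smul_mem _ hxK, ?_⟩
  rw [norm_smul, norm_inv, norm_norm, inv_mul_cancel₀ (norm_ne_zero_iff.mpr hx0)]

lemma exists_min_on_sphere {K : Submodule ℝ (EuclideanSpace ℝ (Fin N))}
    (h : 1 ≤ Module.finrank ℝ K) (f : E → ℝ) (hf : Continuous f) :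
    ∃ x, (x ∈ K ∧ ‖x‖ = 1) ∧ ∀ x', x' ∈ K ∧ ‖x'‖ = 1 → f x ≤ f x' := by
  obtain ⟨x, hx, hmin⟩ := (sphere_compact K).exists_isMinOn
    ((sphere_nonempty' h)) hf.continuousOn
  exact ⟨x, hx, fun x' hx' => hmin hx'⟩

lemma bound_of_unit_bound {K : Submodule ℝ (EuclideanSpace ℝ (Fin N))}
    (g : E →L[ℝ] E) {δ : ℝ} (hδ : 0 ≤ δ)
    (h : ∀ x, x ∈ K ∧ ‖x‖ = 1 → ‖g x‖ ≤ δ) :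
    ∀ x ∈ K, ‖g x‖ ≤ δ * ‖x‖ := by
  intro x hx
  rcases eq_or_ne x 0 with rfl | hx0
  · simp
  · have hn : ‖x‖ ≠ 0 := norm_ne_zero_iff.mpr hx0
    have hu : ‖(‖x‖⁻¹ • x)‖ = 1 := by
      rw [norm_smul, norm_inv, norm_norm, inv_mul_cancel₀ hn]
    have := h (‖x‖⁻¹ • x) ⟨K.smul_mem _ hx, hu⟩
    rw [map_smul, norm_smul, norm_inv, norm_norm] at this
    rw [mul_comm]
    calc ‖g x‖ = ‖x‖ * (‖x‖⁻¹ * ‖g x‖) := by field_simp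
    _ ≤ ‖x‖ * δ := by exact mul_le_mul_of_nonneg_left this (norm_nonneg x)

/-- key adjoint bound: if `‖(1 - pj Y) x‖ ≤ δ‖x‖` on `X`, then `‖pj X w‖ ≤ δ‖w‖` on `Yᗮ`. -/
lemma pj_bound_on_orth {X Y : Submodule ℝ (EuclideanSpace ℝ (Fin N))} {δ : ℝ} (hδ : 0 ≤ δ)
    (h : ∀ x ∈ X, ‖x - pj Y x‖ ≤ δ * ‖x‖) :
    ∀ w ∈ Yᗮ, ‖pj X w‖ ≤ δ * ‖w‖ := by
  intro w hw
  set B : E →L[ℝ] E := (pj X).comp (ContinuousLinearMap.id ℝ E - pj Y) with hB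
  have hBw : B w = pj X w := by
    simp [hB, pj_zero_of_orth Y hw, ContinuousLinearMap.sub_apply]
  have hBadj : ContinuousLinearMap.adjoint B
      = (ContinuousLinearMap.id ℝ E - pj Y).comp (pj X) := by
    rw [hB, ContinuousLinearMap.adjoint_comp, map_sub, ContinuousLinearMap.adjoint_id,
      pj_adjoint, pj_adjoint]
  have hadjnorm : ‖ContinuousLinearMap.adjoint B‖ ≤ δ := by
    apply ContinuousLinearMap.opNorm_le_bound _ hδ
    intro z
    rw [hBadj]
    have h1 : ‖pj X z - pj Y (pj X z)‖ ≤ δ * ‖pj X z‖ := h _ (pj_mem X z)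
    have h2 : ‖pj X z‖ ≤ ‖z‖ := pj_norm_le X z
    calc ‖((ContinuousLinearMap.id ℝ E - pj Y).comp (pj X)) z‖
        = ‖pj X z - pj Y (pj X z)‖ := by
          simp [ContinuousLinearMap.sub_apply]
      _ ≤ δ * ‖pj X z‖ := h1
      _ ≤ δ * ‖z‖ := by exact mul_le_mul_of_nonneg_left h2 hδ
  have hBnorm : ‖B‖ ≤ δ := by
    have := (ContinuousLinearMap.adjoint :
      (EuclideanSpace ℝ (Fin N) →L[ℝ] EuclideanSpace ℝ (Fin N)) ≃ₗᵢ⋆[ℝ] _).norm_map B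
    rw [← this]
    exact hadjnorm
  calc ‖pj X w‖ = ‖B w‖ := by rw [hBw]
    _ ≤ ‖B‖ * ‖w‖ := B.le_opNorm w
    _ ≤ δ * ‖w‖ := mul_le_mul_of_nonneg_right hBnorm (norm_nonneg w)

lemma gap_le {X Y : Submodule ℝ (EuclideanSpace ℝ (Fin N))} {δ : ℝ} (hδ : 0 ≤ δ)
    (h1 : ∀ x ∈ X, ‖x - pj Y x‖ ≤ δ * ‖x‖) (h2 : ∀ y ∈ Y, ‖y - pj X y‖ ≤ δ * ‖y‖) :
    ‖pj X - pj Y‖ ≤ δ := by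
  apply ContinuousLinearMap.opNorm_le_bound _ hδ
  intro z
  set a := pj X (z - pj Y z) with ha
  set b := pj Y z - pj X (pj Y z) with hb
  have hdecomp : (pj X - pj Y) z = a - b := by
    simp only [ha, hb, ContinuousLinearMap.sub_apply, map_sub]
    abel
  have hborth : b ∈ Xᗮ := Submodule.sub_starProjection_mem_orthogonal (K := X) (pj Y z)
  have hinner : (inner ℝ a b : ℝ) = 0 :=
    Submodule.inner_right_of_mem_orthogonal (pj_mem X _) hborth
  have hpyth : ‖a - b‖ ^ 2 = ‖a‖ ^ 2 + ‖b‖ ^ 2 := by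
    have := norm_sub_sq_real a b
    simpa [hinner] using this
  have hA : ‖a‖ ≤ δ * ‖z - pj Y z‖ :=
    pj_bound_on_orth hδ h1 _ (Submodule.sub_starProjection_mem_orthogonal (K := Y) z)
  have hB : ‖b‖ ≤ δ * ‖pj Y z‖ := h2 _ (pj_mem Y z)
  have hPy := pj_pythagoras Y z
  have hsq : ‖(pj X - pj Y) z‖ ^ 2 ≤ (δ * ‖z‖) ^ 2 := by
    rw [hdecomp, hpyth]
    have hA2 : ‖a‖ ^ 2 ≤ (δ * ‖z - pj Y z‖) ^ 2 := pow_le_pow_left₀ (norm_nonneg a) hA 2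
    have hB2 : ‖b‖ ^ 2 ≤ (δ * ‖pj Y z‖) ^ 2 := pow_le_pow_left₀ (norm_nonneg b) hB 2
    rw [mul_pow] at hA2 hB2 ⊢
    calc ‖a‖ ^ 2 + ‖b‖ ^ 2 ≤ δ ^ 2 * ‖z - pj Y z‖ ^ 2 + δ ^ 2 * ‖pj Y z‖ ^ 2 := by linarith
      _ = δ ^ 2 * ‖z‖ ^ 2 := by rw [← hPy]; ring
  have hs := Real.sqrt_le_sqrt hsq
  rwa [Real.sqrt_sq (norm_nonneg _), Real.sqrt_sq (by positivity)] at hs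


open ContinuousLinearMap in
lemma sv_adjoint {U V : Type*} [NormedAddCommGroup U] [InnerProductSpace ℝ U]
    [NormedAddCommGroup V] [InnerProductSpace ℝ V]
    [FiniteDimensional ℝ U] [FiniteDimensional ℝ V]
    (hdim : Module.finrank ℝ U = Module.finrank ℝ V) (T : U →L[ℝ] V) {c : ℝ} (hc : 0 < c)
    (h : ∀ u : U, c * ‖u‖ ≤ ‖T u‖) :
    ∀ v : V, c * ‖v‖ ≤ ‖ContinuousLinearMap.adjoint T v‖ := by
  have hinj : Function.Injective T := by
    intro u u' huu
    have : T (u - u') = 0 := by rw [map_sub, huu, sub_self]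
    have h2 := h (u - u')
    rw [this, norm_zero] at h2
    have : ‖u - u'‖ ≤ 0 := by
      by_contra hpos
      push_neg at hpos
      nlinarith
    have : u - u' = 0 := norm_le_zero_iff.mp this
    exact sub_eq_zero.mp this
  have hsurj : Function.Surjective T := by
    have := (LinearMap.injective_iff_surjective_of_finrank_eq_finrank hdim).mp
      (show Function.Injective (T : U →ₗ[ℝ] V) from hinj)
    exact this
  intro v
  rcases eq_or_ne v 0 with rfl | hv0
  · simp
  obtain ⟨u, rfl⟩ := hsurj v
  have key : (inner ℝ (ContinuousLinearMap.adjoint T (T u)) u : ℝ) = ‖T u‖ ^ 2 := by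
    rw [ContinuousLinearMap.adjoint_inner_left, real_inner_self_eq_norm_sq]
  have h1 : ‖T u‖ ^ 2 ≤ ‖ContinuousLinearMap.adjoint T (T u)‖ * ‖u‖ := by
    rw [← key]; exact real_inner_le_norm _ _
  have h2 : c * ‖u‖ ≤ ‖T u‖ := h u
  have hTu : 0 < ‖T u‖ := norm_pos_iff.mpr hv0
  have hu : 0 < ‖u‖ := by
    rcases eq_or_ne u 0 with rfl | hu0
    · simp at hv0
    · exact norm_pos_iff.mpr hu0
  nlinarith [norm_nonneg (ContinuousLinearMap.adjoint T (T u))]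

section minsym

variable (X Y : Submodule ℝ (EuclideanSpace ℝ (Fin N)))

noncomputable def TXY : X →L[ℝ] Y := Y.orthogonalProjectionOnto.comp X.subtypeL

lemma TXY_norm (x : X) : ‖TXY X Y x‖ = ‖pj Y (x : E)‖ := rfl

lemma TXY_adjoint : ContinuousLinearMap.adjoint (TXY X Y) = TXY Y X := by
  rw [TXY, ContinuousLinearMap.adjoint_comp, Submodule.adjoint_subtypeL,
    Submodule.adjoint_orthogonalProjectionOnto]
  rfl

lemma TXY_scale {m : ℝ} (hm : 0 ≤ m)
    (hmin : ∀ x, x ∈ X ∧ ‖x‖ = 1 → m ≤ ‖pj Y x‖) :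
    ∀ u : X, m * ‖u‖ ≤ ‖TXY X Y u‖ := by
  intro u
  rcases eq_or_ne u 0 with rfl | hu0
  · simp
  · have hn : ‖u‖ ≠ 0 := norm_ne_zero_iff.mpr hu0
    have hnc : ‖(u : E)‖ = ‖u‖ := rfl
    have hu : (‖u‖⁻¹ • (u : E)) ∈ X ∧ ‖‖u‖⁻¹ • (u : E)‖ = 1 := by
      constructor
      · exact X.smul_mem _ u.2
      · rw [norm_smul, norm_inv, norm_norm, hnc, inv_mul_cancel₀ hn]
    have := hmin _ hu
    rw [map_smul, norm_smul, norm_inv, norm_norm] at this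
    show m * ‖u‖ ≤ ‖pj Y (u : E)‖
    calc m * ‖u‖ ≤ (‖u‖⁻¹ * ‖pj Y (u : E)‖) * ‖u‖ :=
          mul_le_mul_of_nonneg_right this (norm_nonneg u)
      _ = ‖pj Y (u : E)‖ := by
          rw [mul_comm (‖u‖⁻¹), mul_assoc, inv_mul_cancel₀ hn, mul_one]
end minsym

lemma min_pj_symm {X Y : Submodule ℝ (EuclideanSpace ℝ (Fin N))}
    (hdim : Module.finrank ℝ X = Module.finrank ℝ Y)
    {x₀ y₀ : E} (hx₀ : x₀ ∈ X ∧ ‖x₀‖ = 1) (hy₀ : y₀ ∈ Y ∧ ‖y₀‖ = 1)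
    (hminX : ∀ x, x ∈ X ∧ ‖x‖ = 1 → ‖pj Y x₀‖ ≤ ‖pj Y x‖)
    (hminY : ∀ y, y ∈ Y ∧ ‖y‖ = 1 → ‖pj X y₀‖ ≤ ‖pj X y‖) :
    ‖pj Y x₀‖ = ‖pj X y₀‖ := by
  set m := ‖pj Y x₀‖ with hmdef
  set m' := ‖pj X y₀‖ with hm'def
  have hm0 : 0 ≤ m := norm_nonneg _
  have hm'0 : 0 ≤ m' := norm_nonneg _
  have c1 : ∀ u : X, m * ‖u‖ ≤ ‖TXY X Y u‖ := TXY_scale X Y hm0 hminX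
  have c2 : ∀ u : Y, m' * ‖u‖ ≤ ‖TXY Y X u‖ := TXY_scale Y X hm'0 hminY
  set vy : Y := ⟨y₀, hy₀.1⟩ with hvy
  set vx : X := ⟨x₀, hx₀.1⟩ with hvx
  have hvyn : ‖vy‖ = 1 := hy₀.2
  have hvxn : ‖vx‖ = 1 := hx₀.2
  have hTyx : ‖TXY Y X vy‖ = m' := by rw [TXY_norm]
  have hTxy : ‖TXY X Y vx‖ = m := by rw [TXY_norm]
  rcases lt_or_eq_of_le hm0 with hm | hm
  · have h1 := sv_adjoint hdim (TXY X Y) hm c1 vy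
    rw [TXY_adjoint, hvyn, mul_one, hTyx] at h1
    have hm' : 0 < m' := lt_of_lt_of_le hm h1
    have h2 := sv_adjoint hdim.symm (TXY Y X) hm' c2 vx
    rw [TXY_adjoint, hvxn, mul_one, hTxy] at h2
    linarith
  · rcases lt_or_eq_of_le hm'0 with hm' | hm'
    · have h2 := sv_adjoint hdim.symm (TXY Y X) hm' c2 vx
      rw [TXY_adjoint, hvxn, mul_one, hTxy] at h2
      linarith
    · rw [← hm, ← hm']

lemma sSup_inner_eq {Y : Submodule ℝ (EuclideanSpace ℝ (Fin N))}
    (hY : 1 ≤ Module.finrank ℝ Y) (x : E) :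
    sSup ((fun y : E => (inner ℝ x y : ℝ)) '' {y | y ∈ Y ∧ ‖y‖ = 1}) = ‖pj Y x‖ := by
  have hval : ∀ y ∈ Y, (inner ℝ x y : ℝ) = (inner ℝ (pj Y x) y : ℝ) := by
    intro y hy
    have h := pj_inner_sub Y x hy
    rw [inner_sub_left] at h
    linarith
  have hub : ∀ v ∈ ((fun y : E => (inner ℝ x y : ℝ)) '' {y | y ∈ Y ∧ ‖y‖ = 1}),
      v ≤ ‖pj Y x‖ := by
    rintro v ⟨y, ⟨hyY, hy1⟩, rfl⟩
    simp only
    rw [hval y hyY]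
    calc (inner ℝ (pj Y x) y : ℝ) ≤ ‖pj Y x‖ * ‖y‖ := real_inner_le_norm _ _
      _ = ‖pj Y x‖ := by rw [hy1, mul_one]
  rcases eq_or_ne (pj Y x) 0 with h0 | h0
  · obtain ⟨y, hy⟩ := sphere_nonempty' hY
    have hmem : (inner ℝ x y : ℝ) ∈ ((fun y : E => (inner ℝ x y : ℝ)) ''
        {y | y ∈ Y ∧ ‖y‖ = 1}) := ⟨y, hy, rfl⟩
    have hv0 : (inner ℝ x y : ℝ) = 0 := by
      rw [hval y hy.1, h0, inner_zero_left]
    apply le_antisymm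
    · apply csSup_le ⟨_, hmem⟩ hub
    · rw [h0, norm_zero, ← hv0]
      exact le_csSup ⟨‖pj Y x‖, hub⟩ hmem
  · have hn : ‖pj Y x‖ ≠ 0 := norm_ne_zero_iff.mpr h0
    set y : E := ‖pj Y x‖⁻¹ • pj Y x with hydef
    have hyY : y ∈ Y := Y.smul_mem _ (pj_mem Y x)
    have hy1 : ‖y‖ = 1 := by
      rw [hydef, norm_smul, norm_inv, norm_norm, inv_mul_cancel₀ hn]
    have hvval : (inner ℝ x y : ℝ) = ‖pj Y x‖ := by
      rw [hval y hyY, hydef, real_inner_smul_right, real_inner_self_eq_norm_sq]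
      field_simp
    apply le_antisymm
    · exact csSup_le ⟨_, ⟨y, ⟨hyY, hy1⟩, rfl⟩⟩ hub
    · rw [← hvval]
      exact le_csSup ⟨‖pj Y x‖, hub⟩ ⟨y, ⟨hyY, hy1⟩, rfl⟩


/-- For subspaces `X, Y ⊆ ℝ^N` of equal dimension `≥ 1`,
`min_{x ∈ X, ‖x‖=1} max_{y ∈ Y, ‖y‖=1} ⟨x,y⟩ = √(1 − d(X,Y)²)`. -/
theorem stmt9 {N : ℕ} (X Y : Submodule ℝ (EuclideanSpace ℝ (Fin N)))
    (hdim : Module.finrank ℝ X = Module.finrank ℝ Y) (hpos : 1 ≤ Module.finrank ℝ X) :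
    sInf ((fun x : EuclideanSpace ℝ (Fin N) =>
        sSup ((fun y : EuclideanSpace ℝ (Fin N) => (inner ℝ x y : ℝ)) ''
          {y | y ∈ Y ∧ ‖y‖ = 1})) '' {x | x ∈ X ∧ ‖x‖ = 1})
      = Real.sqrt (1 - gapMetric X Y ^ 2) := by
  have hYpos : 1 ≤ Module.finrank ℝ Y := hdim ▸ hpos
  -- rewrite the inner sSup
  have himg : (fun x : EuclideanSpace ℝ (Fin N) => sSup ((fun y : EuclideanSpace ℝ (Fin N) => (inner ℝ x y : ℝ)) '' {y | y ∈ Y ∧ ‖y‖ = 1})) ''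
      {x | x ∈ X ∧ ‖x‖ = 1} = (fun x : EuclideanSpace ℝ (Fin N) => ‖pj Y x‖) '' {x | x ∈ X ∧ ‖x‖ = 1} :=
    Set.image_congr (fun x _ => sSup_inner_eq hYpos x)
  rw [himg]
  -- minimizers
  obtain ⟨x₀, hx₀, hminX⟩ := exists_min_on_sphere hpos (fun x => ‖pj Y x‖)
    (continuous_norm.comp (pj Y).continuous)
  obtain ⟨y₀, hy₀, hminY⟩ := exists_min_on_sphere hYpos (fun y => ‖pj X y‖)
    (continuous_norm.comp (pj X).continuous)
  set m := ‖pj Y x₀‖ with hmdef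
  set m' := ‖pj X y₀‖ with hm'def
  have hm0 : 0 ≤ m := norm_nonneg _
  set δ := ‖x₀ - pj Y x₀‖ with hδdef
  set δ' := ‖y₀ - pj X y₀‖ with hδ'def
  have hδ0 : 0 ≤ δ := norm_nonneg _
  have hδ'0 : 0 ≤ δ' := norm_nonneg _
  have hpyx : m ^ 2 + δ ^ 2 = 1 := by
    have := pj_pythagoras Y x₀
    rw [hx₀.2] at this
    simpa using this
  have hpyy : m' ^ 2 + δ' ^ 2 = 1 := by
    have := pj_pythagoras X y₀
    rw [hy₀.2] at this
    simpa using this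
  -- m = m'
  have hmm' : m = m' := min_pj_symm hdim hx₀ hy₀ hminX hminY
  have hδδ' : δ = δ' := by
    have hsq : δ ^ 2 = δ' ^ 2 := by nlinarith
    calc δ = Real.sqrt (δ ^ 2) := (Real.sqrt_sq hδ0).symm
      _ = Real.sqrt (δ' ^ 2) := by rw [hsq]
      _ = δ' := Real.sqrt_sq hδ'0
  -- sInf = m
  have hsinf : sInf ((fun x : EuclideanSpace ℝ (Fin N) => ‖pj Y x‖) '' {x | x ∈ X ∧ ‖x‖ = 1}) = m := by
    apply IsLeast.csInf_eq
    constructor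
    · exact ⟨x₀, hx₀, rfl⟩
    · rintro v ⟨x, hx, rfl⟩
      exact hminX x hx
  rw [hsinf]
  -- gap = δ
  have key1 : ∀ x, x ∈ X ∧ ‖x‖ = 1 → ‖(ContinuousLinearMap.id ℝ (EuclideanSpace ℝ (Fin N)) - pj Y) x‖ ≤ δ := by
    intro x ⟨hx, hx1⟩
    have p1 := pj_pythagoras Y x
    rw [hx1] at p1
    have hmle := hminX x ⟨hx, hx1⟩
    simp only [ContinuousLinearMap.sub_apply, ContinuousLinearMap.id_apply]
    nlinarith [norm_nonneg (x - pj Y x), norm_nonneg (pj Y x)]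
  have key2 : ∀ y, y ∈ Y ∧ ‖y‖ = 1 → ‖(ContinuousLinearMap.id ℝ (EuclideanSpace ℝ (Fin N)) - pj X) y‖ ≤ δ := by
    intro y ⟨hy, hy1⟩
    have p1 := pj_pythagoras X y
    rw [hy1] at p1
    have hmle := hminY y ⟨hy, hy1⟩
    simp only [ContinuousLinearMap.sub_apply, ContinuousLinearMap.id_apply]
    rw [hδδ']
    nlinarith [norm_nonneg (y - pj X y), norm_nonneg (pj X y)]
  have h1 : ∀ x ∈ X, ‖x - pj Y x‖ ≤ δ * ‖x‖ := by
    intro x hx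
    have := bound_of_unit_bound (K := X) (ContinuousLinearMap.id ℝ (EuclideanSpace ℝ (Fin N)) - pj Y) hδ0 key1 x hx
    simpa using this
  have h2 : ∀ y ∈ Y, ‖y - pj X y‖ ≤ δ * ‖y‖ := by
    intro y hy
    have := bound_of_unit_bound (K := Y) (ContinuousLinearMap.id ℝ (EuclideanSpace ℝ (Fin N)) - pj X) hδ0 key2 y hy
    simpa using this
  have hgap : gapMetric X Y = δ := by
    have hle : ‖pj X - pj Y‖ ≤ δ := gap_le hδ0 h1 h2
    have hge : δ ≤ ‖pj X - pj Y‖ := by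
      have := (pj X - pj Y).le_opNorm x₀
      rw [hx₀.2, mul_one] at this
      have heval : (pj X - pj Y) x₀ = x₀ - pj Y x₀ := by
        rw [ContinuousLinearMap.sub_apply, pj_eq_self X hx₀.1]
      rw [heval] at this
      exact this
    have : gapMetric X Y = ‖pj X - pj Y‖ := rfl
    rw [this]
    linarith
  rw [hgap, show (1 : ℝ) - δ ^ 2 = m ^ 2 by linarith, Real.sqrt_sq hm0]
end

section
/- Let 0 ≤ M ≤ N, let 0 < α ≤ 1, and let Y ⊆ ℝ^N be a subspace with dim Y = N − M. Then the union of all subspaces X ⊆ ℝ^N with dim X = N − M and ‖P_X − P_Y‖ < α equals {x ∈ ℝ^N : x ≠ 0 and ‖P_{Y⊥}x‖₂ < α‖x‖₂} ∪ {0}. -/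
open Submodule RealInnerProductSpace

variable {E : Type*} [NormedAddCommGroup E] [InnerProductSpace ℝ E] [FiniteDimensional ℝ E]

/-- Projection onto the sup of two orthogonal subspaces is the sum of the projections. -/
lemma proj_sup (U V : Submodule ℝ E) (h : U ≤ Vᗮ) (z : E) :
    (orthogonalProjection (U ⊔ V) z : E) =
      (orthogonalProjection U z : E) + (orthogonalProjection V z : E) := by
  refine (eq_starProjection_of_mem_of_inner_eq_zero (K := U ⊔ V) ?_ ?_ : (U ⊔ V).starProjection z = _)
  · exact Submodule.add_mem_sup (coe_mem _) (coe_mem _)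
  · intro t ht
    rw [Submodule.mem_sup] at ht
    obtain ⟨a, ha, b, hb, rfl⟩ := ht
    have h1 : ⟪z - orthogonalProjection U z, a⟫ = 0 :=
      starProjection_inner_eq_zero z a ha
    have h2 : ⟪z - orthogonalProjection V z, b⟫ = 0 :=
      starProjection_inner_eq_zero z b hb
    have h3 : ⟪(orthogonalProjection V z : E), a⟫ = 0 := by
      have := h ha
      rw [Submodule.mem_orthogonal] at this
      exact this _ (coe_mem _)
    have h4 : ⟪(orthogonalProjection U z : E), b⟫ = 0 := by
      have hU : (orthogonalProjection U z : E) ∈ Vᗮ := h (coe_mem _)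
      rw [Submodule.mem_orthogonal'] at hU
      exact hU _ hb
    have e1 : ⟪z - (↑(orthogonalProjection U z) + ↑(orthogonalProjection V z)), a + b⟫
        = ⟪z - orthogonalProjection U z, a⟫ - ⟪(orthogonalProjection V z : E), a⟫
          + (⟪z - orthogonalProjection V z, b⟫ - ⟪(orthogonalProjection U z : E), b⟫) := by
      simp only [inner_sub_left, inner_add_left, inner_add_right]
      ring
    rw [e1, h1, h2, h3, h4]; ring

lemma eq_orthogonalProjection_of_eq_submodule' {K K' : Submodule ℝ E}
    [K.HasOrthogonalProjection] [K'.HasOrthogonalProjection] (h : K = K') (u : E) :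
    (orthogonalProjection K u : E) = (orthogonalProjection K' u : E) := by
  subst h; rfl

lemma rank_two_bound (u w : E) (hu : ‖u‖ = 1) (hw : ‖w‖ = 1) (huw : ⟪u, w⟫ = 0)
    (c s : ℝ) (hcs : c ^ 2 + s ^ 2 = 1) (hs : 0 ≤ s) (z : E) :
    ‖⟪c • u + s • w, z⟫ • (c • u + s • w) - ⟪u, z⟫ • u‖ ≤ s * ‖z‖ := by
  have hwu : ⟪w, u⟫ = 0 := by rw [real_inner_comm]; exact huw
  have huu : ⟪u, u⟫ = 1 := by rw [real_inner_self_eq_norm_sq, hu]; norm_num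
  have hww : ⟪w, w⟫ = 1 := by rw [real_inner_self_eq_norm_sq, hw]; norm_num
  have key : ∀ a b : ℝ, ‖a • u + b • w‖ ^ 2 = a ^ 2 + b ^ 2 := by
    intro a b
    rw [← real_inner_self_eq_norm_sq]
    simp only [inner_add_left, inner_add_right, real_inner_smul_left, real_inner_smul_right,
      huw, hwu, huu, hww]
    ring
  have hvz : ⟪c • u + s • w, z⟫ = c * ⟪u, z⟫ + s * ⟪w, z⟫ := by
    simp only [inner_add_left, real_inner_smul_left]
  have hvec : ⟪c • u + s • w, z⟫ • (c • u + s • w) - ⟪u, z⟫ • u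
      = (s * (c * ⟪w, z⟫ - s * ⟪u, z⟫)) • u + (s * (c * ⟪u, z⟫ + s * ⟪w, z⟫)) • w := by
    rw [hvz]
    match_scalars
    · linear_combination (⟪u, z⟫ : ℝ) * hcs
    · ring
  have hpq : ⟪u, z⟫ ^ 2 + ⟪w, z⟫ ^ 2 ≤ ‖z‖ ^ 2 := by
    have h0 : 0 ≤ ‖z - (⟪u, z⟫ • u + ⟪w, z⟫ • w)‖ ^ 2 := sq_nonneg _
    have hexp : ‖z - (⟪u, z⟫ • u + ⟪w, z⟫ • w)‖ ^ 2
        = ‖z‖ ^ 2 - (⟪u, z⟫ ^ 2 + ⟪w, z⟫ ^ 2) := by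
      rw [← real_inner_self_eq_norm_sq (z - _)]
      simp only [inner_sub_left, inner_sub_right, inner_add_left, inner_add_right,
        real_inner_smul_left, real_inner_smul_right, huw, hwu, huu, hww,
        real_inner_comm z u, real_inner_comm z w]
      rw [real_inner_self_eq_norm_sq]
      ring
    linarith
  have hle : ‖⟪c • u + s • w, z⟫ • (c • u + s • w) - ⟪u, z⟫ • u‖ ^ 2 ≤ (s * ‖z‖) ^ 2 := by
    rw [hvec, key]
    have hiden : (c * ⟪w, z⟫ - s * ⟪u, z⟫) ^ 2 + (c * ⟪u, z⟫ + s * ⟪w, z⟫) ^ 2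
        = ⟪u, z⟫ ^ 2 + ⟪w, z⟫ ^ 2 := by
      linear_combination ((⟪u, z⟫ : ℝ) ^ 2 + ⟪w, z⟫ ^ 2) * hcs
    calc (s * (c * ⟪w, z⟫ - s * ⟪u, z⟫)) ^ 2 + (s * (c * ⟪u, z⟫ + s * ⟪w, z⟫)) ^ 2
        = s ^ 2 * ((c * ⟪w, z⟫ - s * ⟪u, z⟫) ^ 2 + (c * ⟪u, z⟫ + s * ⟪w, z⟫) ^ 2) := by ring
      _ = s ^ 2 * (⟪u, z⟫ ^ 2 + ⟪w, z⟫ ^ 2) := by rw [hiden]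
      _ ≤ s ^ 2 * ‖z‖ ^ 2 := mul_le_mul_of_nonneg_left hpq (sq_nonneg s)
      _ = (s * ‖z‖) ^ 2 := by ring
  calc ‖⟪c • u + s • w, z⟫ • (c • u + s • w) - ⟪u, z⟫ • u‖
      = Real.sqrt (‖⟪c • u + s • w, z⟫ • (c • u + s • w) - ⟪u, z⟫ • u‖ ^ 2) :=
        (Real.sqrt_sq (norm_nonneg _)).symm
    _ ≤ Real.sqrt ((s * ‖z‖) ^ 2) := Real.sqrt_le_sqrt hle
    _ = s * ‖z‖ := Real.sqrt_sq (mul_nonneg hs (norm_nonneg z))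


set_option maxHeartbeats 2000000 in
/-- For a subspace `Y ⊆ ℝ^N` with `dim Y = N − M` and `0 < α ≤ 1`, the
union of all `(N−M)`-dimensional subspaces `X` with `d(X,Y) < α` equals
`{x ≠ 0 : ‖P_{Y⊥}x‖₂ < α‖x‖₂} ∪ {0}`. -/
theorem stmt11 {N M : ℕ} (hMN : M ≤ N) (α : ℝ) (hα0 : 0 < α) (hα1 : α ≤ 1)
    (Y : Submodule ℝ (EuclideanSpace ℝ (Fin N)))
    (hY : Module.finrank ℝ Y = N - M) :
    (⋃ X ∈ {X : Submodule ℝ (EuclideanSpace ℝ (Fin N)) |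
        Module.finrank ℝ X = N - M ∧ gapMetric X Y < α},
      (X : Set (EuclideanSpace ℝ (Fin N))))
    = {x : EuclideanSpace ℝ (Fin N) | x ≠ 0 ∧
        ‖(Yᗮ.orthogonalProjectionOnto x : EuclideanSpace ℝ (Fin N))‖ < α * ‖x‖} ∪ {0} := by
  classical
  have hgapYY : gapMetric Y Y < α := by
    unfold gapMetric; rw [sub_self, norm_zero]; exact hα0
  ext x
  simp only [Set.mem_iUnion, Set.mem_setOf_eq, Set.mem_union, Set.mem_singleton_iff,
    SetLike.mem_coe, exists_prop]
  constructor
  · rintro ⟨X, ⟨hdim, hgap⟩, hx⟩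
    by_cases hx0 : x = 0
    · exact Or.inr hx0
    · refine Or.inl ⟨hx0, ?_⟩
      have h2 : (orthogonalProjection X x : EuclideanSpace ℝ (Fin N)) = x :=
        starProjection_eq_self_iff.mpr hx
      have h1 : (orthogonalProjection Y x : EuclideanSpace ℝ (Fin N))
          + (orthogonalProjection Yᗮ x : EuclideanSpace ℝ (Fin N)) = x :=
        starProjection_add_starProjection_orthogonal (K := Y) x
      have hdecomp : (orthogonalProjection Yᗮ x : EuclideanSpace ℝ (Fin N)) =
          (X.subtypeL.comp (orthogonalProjection X)
            - Y.subtypeL.comp (orthogonalProjection Y)) x := by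
        simp only [ContinuousLinearMap.sub_apply, ContinuousLinearMap.comp_apply,
          Submodule.subtypeL_apply, Submodule.coe_subtype, h2]
        rw [eq_sub_iff_add_eq, add_comm]
        exact h1
      have hxpos : (0 : ℝ) < ‖x‖ := norm_pos_iff.mpr hx0
      calc ‖(orthogonalProjection Yᗮ x : EuclideanSpace ℝ (Fin N))‖
          ≤ gapMetric X Y * ‖x‖ := by
            rw [hdecomp]
            exact ContinuousLinearMap.le_opNorm _ x
        _ < α * ‖x‖ := mul_lt_mul_of_pos_right hgap hxpos
  · rintro (⟨hx0, hlt⟩ | rfl)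
    swap
    · exact ⟨Y, ⟨hY, hgapYY⟩, Submodule.zero_mem Y⟩
    by_cases hxY : x ∈ Y
    · exact ⟨Y, ⟨hY, hgapYY⟩, hxY⟩
    -- construction of X
    obtain ⟨y, hyY, w₀, hw₀, hx_eq, hlt'⟩ :
        ∃ y ∈ Y, ∃ w₀ ∈ Yᗮ, y + w₀ = x ∧ ‖w₀‖ < α * ‖x‖ :=
      ⟨orthogonalProjection Y x, Submodule.coe_mem _, orthogonalProjection Yᗮ x,
        Submodule.coe_mem _, starProjection_add_starProjection_orthogonal (K := Y) x, hlt⟩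
    clear hlt
    rename' hlt' => hlt
    have hw0ne : w₀ ≠ 0 := by
      intro h
      exact hxY (by rw [← hx_eq, h, add_zero]; exact hyY)
    have hyw : ⟪y, w₀⟫ = 0 := (Submodule.mem_orthogonal Y w₀).1 hw₀ y hyY
    have hxpos : (0 : ℝ) < ‖x‖ := norm_pos_iff.mpr hx0
    have hwpos : (0 : ℝ) < ‖w₀‖ := norm_pos_iff.mpr hw0ne
    have hpyth : ‖x‖ ^ 2 = ‖y‖ ^ 2 + ‖w₀‖ ^ 2 := by
      rw [← hx_eq]
      simp only [pow_two]
      exact norm_add_sq_eq_norm_sq_add_norm_sq_of_inner_eq_zero y w₀ hyw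
    have hyne : y ≠ 0 := by
      intro h
      rw [h, norm_zero] at hpyth
      have h1 : ‖x‖ ^ 2 = ‖w₀‖ ^ 2 := by linarith
      have h2 : ‖x‖ = ‖w₀‖ := by nlinarith [hxpos, hwpos]
      have h3 : α * ‖x‖ ≤ ‖x‖ := by nlinarith
      linarith
    have hypos : (0 : ℝ) < ‖y‖ := norm_pos_iff.mpr hyne
    set u : EuclideanSpace ℝ (Fin N) := ‖y‖⁻¹ • y with hu_def
    set w : EuclideanSpace ℝ (Fin N) := ‖w₀‖⁻¹ • w₀ with hw2_def
    set c : ℝ := ‖y‖ / ‖x‖ with hc_def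
    set s : ℝ := ‖w₀‖ / ‖x‖ with hs_def
    have hu : ‖u‖ = 1 := norm_smul_inv_norm hyne
    have hw : ‖w‖ = 1 := norm_smul_inv_norm hw0ne
    have huw : ⟪u, w⟫ = 0 := by
      rw [hu_def, hw2_def, real_inner_smul_left, real_inner_smul_right, hyw]
      ring
    have hcs : c ^ 2 + s ^ 2 = 1 := by
      rw [hc_def, hs_def, div_pow, div_pow, ← add_div, ← hpyth]
      field_simp
    have hs : 0 ≤ s := div_nonneg (norm_nonneg _) (norm_nonneg _)
    have hslt : s < α := (div_lt_iff₀ hxpos).mpr hlt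
    have hv : ‖x‖⁻¹ • x = c • u + s • w := by
      rw [hu_def, hw2_def, hc_def, hs_def, smul_smul, smul_smul]
      have e1 : ‖y‖ / ‖x‖ * ‖y‖⁻¹ = ‖x‖⁻¹ := by field_simp [mul_comm]
      have e2 : ‖w₀‖ / ‖x‖ * ‖w₀‖⁻¹ = ‖x‖⁻¹ := by field_simp [mul_comm]
      rw [e1, e2, ← smul_add, hx_eq]
    set Z : Submodule ℝ (EuclideanSpace ℝ (Fin N)) := (ℝ ∙ y)ᗮ ⊓ Y with hZ_def
    have hspanY : (ℝ ∙ y) ⊔ Z = Y :=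
      Submodule.sup_orthogonal_inf_of_hasOrthogonalProjection
        ((Submodule.span_singleton_le_iff_mem y Y).mpr hyY)
    set X : Submodule ℝ (EuclideanSpace ℝ (Fin N)) := (ℝ ∙ x) ⊔ Z with hX_def
    have hxX : x ∈ X := Submodule.mem_sup_left (Submodule.mem_span_singleton_self x)
    have hZinner : ∀ z ∈ Z, ⟪y, z⟫ = 0 ∧ ⟪w₀, z⟫ = 0 := by
      intro z hz
      obtain ⟨hz1, hz2⟩ := hz
      constructor
      · exact (Submodule.mem_orthogonal _ z).1 hz1 y (Submodule.mem_span_singleton_self y)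
      · rw [real_inner_comm]
        exact (Submodule.mem_orthogonal' Yᗮ z).1 (Submodule.le_orthogonal_orthogonal Y hz2) w₀ hw₀
    have hyZ : (ℝ ∙ y) ≤ Zᗮ := by
      rw [Submodule.span_singleton_le_iff_mem, Submodule.mem_orthogonal]
      intro z hz
      rw [real_inner_comm]
      exact (hZinner z hz).1
    have hxZ : (ℝ ∙ x) ≤ Zᗮ := by
      rw [Submodule.span_singleton_le_iff_mem, Submodule.mem_orthogonal]
      intro z hz
      rw [real_inner_comm, ← hx_eq, inner_add_left, (hZinner z hz).1, (hZinner z hz).2]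
      ring
    -- dimension count
    have hinfy : (ℝ ∙ y) ⊓ Z = ⊥ := by
      rw [eq_bot_iff]
      rintro v ⟨hv1, hv2⟩
      have hmem : v ∈ (ℝ ∙ y) ⊓ (ℝ ∙ y)ᗮ := ⟨hv1, hv2.1⟩
      rwa [Submodule.inf_orthogonal_eq_bot] at hmem
    have hinfx : (ℝ ∙ x) ⊓ Z = ⊥ := by
      rw [eq_bot_iff]
      rintro v ⟨hv1, hv2⟩
      obtain ⟨t, rfl⟩ := Submodule.mem_span_singleton.mp hv1
      rcases eq_or_ne t 0 with rfl | ht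
      · simp
      · exfalso
        apply hxY
        have hmem := Submodule.smul_mem Y t⁻¹ hv2.2
        rwa [smul_smul, inv_mul_cancel₀ ht, one_smul] at hmem
    have hdimX : Module.finrank ℝ X = N - M := by
      have e1 := Submodule.finrank_sup_add_finrank_inf_eq (ℝ ∙ y) Z
      rw [hinfy, hspanY, finrank_bot, add_zero, finrank_span_singleton hyne] at e1
      have e2 := Submodule.finrank_sup_add_finrank_inf_eq (ℝ ∙ x) Z
      rw [hinfx, finrank_bot, add_zero, finrank_span_singleton hx0, ← hX_def] at e2
      rw [e2, ← e1, hY]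
    -- gap bound
    have hgap : gapMetric X Y < α := by
      have hbound : ∀ z : EuclideanSpace ℝ (Fin N),
          ‖(X.subtypeL.comp (orthogonalProjection X)
            - Y.subtypeL.comp (orthogonalProjection Y)) z‖ ≤ s * ‖z‖ := by
        intro z
        have hX' : (orthogonalProjection X z : EuclideanSpace ℝ (Fin N))
            = (orthogonalProjection (ℝ ∙ x) z : EuclideanSpace ℝ (Fin N))
              + (orthogonalProjection Z z : EuclideanSpace ℝ (Fin N)) :=
          proj_sup _ _ hxZ z
        have hY' : (orthogonalProjection Y z : EuclideanSpace ℝ (Fin N))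
            = (orthogonalProjection (ℝ ∙ y) z : EuclideanSpace ℝ (Fin N))
              + (orthogonalProjection Z z : EuclideanSpace ℝ (Fin N)) := by
          rw [eq_orthogonalProjection_of_eq_submodule' hspanY.symm z]
          exact proj_sup _ _ hyZ z
        have hPx : (orthogonalProjection (ℝ ∙ x) z : EuclideanSpace ℝ (Fin N))
            = ⟪c • u + s • w, z⟫ • (c • u + s • w) := by
          have hsp : (ℝ ∙ x) = ℝ ∙ (‖x‖⁻¹ • x) :=
            (Submodule.span_singleton_smul_eq (isUnit_iff_ne_zero.mpr
              (inv_ne_zero (ne_of_gt hxpos))) x).symm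
          have hnv : ‖c • u + s • w‖ = 1 := by rw [← hv]; exact norm_smul_inv_norm hx0
          rw [eq_orthogonalProjection_of_eq_submodule' hsp z, ← starProjection_apply, starProjection_singleton,
            hv, hnv]
          norm_num
        have hPy : (orthogonalProjection (ℝ ∙ y) z : EuclideanSpace ℝ (Fin N))
            = ⟪u, z⟫ • u := by
          have hsp : (ℝ ∙ y) = ℝ ∙ u := by
            rw [hu_def]
            exact (Submodule.span_singleton_smul_eq (isUnit_iff_ne_zero.mpr
              (inv_ne_zero (ne_of_gt hypos))) y).symm
          rw [eq_orthogonalProjection_of_eq_submodule' hsp z, ← starProjection_apply, starProjection_singleton, hu]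
          norm_num
        have happ : (X.subtypeL.comp (orthogonalProjection X)
            - Y.subtypeL.comp (orthogonalProjection Y)) z
            = ⟪c • u + s • w, z⟫ • (c • u + s • w) - ⟪u, z⟫ • u := by
          simp only [ContinuousLinearMap.sub_apply, ContinuousLinearMap.comp_apply,
            Submodule.subtypeL_apply, Submodule.coe_subtype]
          rw [hX', hY', hPx, hPy]
          abel
        rw [happ]
        exact rank_two_bound u w hu hw huw c s hcs hs z
      have hle : gapMetric X Y ≤ s := by
        unfold gapMetric
        exact ContinuousLinearMap.opNorm_le_bound _ hs hbound
      linarith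
    exact ⟨X, ⟨hdimX, hgap⟩, hxX⟩
end

section
/- Let J ≥ 1 be an integer, let 0 ≤ δ < 1/3, and suppose Φ : ℝ^N → ℝ^M satisfies (1 − δ)‖x‖₂ ≤ ‖Φx‖₂ ≤ (1 + δ)‖x‖₂ for every J-sparse x ∈ ℝ^N. Then Φ satisfies the (3/√J, 1/3 − δ)-robust width property over B₁: for every x ∈ ℝ^N with ‖Φx‖₂ < (1/3 − δ)‖x‖₂, one has ‖x‖₂ ≤ (3/√J)‖x‖₁. -/
open Finset

/-- Choose the `k` largest elements (w.r.t. `f`) of a finset. -/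
lemma exists_topK {α : Type*} [DecidableEq α] (f : α → ℝ) :
    ∀ (k : ℕ) (s : Finset α), k ≤ s.card →
      ∃ T ⊆ s, T.card = k ∧ ∀ i ∈ T, ∀ j ∈ s, j ∉ T → f j ≤ f i := by
  intro k
  induction k with
  | zero => exact fun s _ => ⟨∅, by simp⟩
  | succ k ih =>
    intro s hk
    obtain ⟨T, hTs, hTc, hTop⟩ := ih s (le_trans (Nat.le_succ k) hk)
    have hne : (s \ T).Nonempty := by
      rw [← Finset.card_pos, Finset.card_sdiff_of_subset hTs]; omega
    obtain ⟨m, hm, hmax⟩ := (s \ T).exists_max_image f hne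
    have hmT : m ∉ T := (Finset.mem_sdiff.mp hm).2
    refine ⟨insert m T, Finset.insert_subset (Finset.mem_sdiff.mp hm).1 hTs, ?_, ?_⟩
    · rw [Finset.card_insert_of_notMem hmT, hTc]
    · intro i hi j hj hjT
      have hjT' : j ∉ T := fun h => hjT (Finset.mem_insert_of_mem h)
      rcases Finset.mem_insert.mp hi with rfl | hiT
      · exact hmax j (Finset.mem_sdiff.mpr ⟨hj, hjT'⟩)
      · exact hTop i hiT j hj hjT'

lemma ncard_eq_card_filter {N : ℕ} (y : EuclideanSpace ℝ (Fin N)) :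
    {i | y i ≠ 0}.ncard = (Finset.univ.filter (fun i => y i ≠ 0)).card := by
  rw [← Set.ncard_coe_finset]; congr 1; ext i; simp

/-- Norm bound for a vector supported on ≤ J coordinates, each of size ≤ μ. -/
lemma sparse_norm_le {N : ℕ} (J : ℕ) (y : EuclideanSpace ℝ (Fin N)) (μ : ℝ) (hμ : 0 ≤ μ)
    (hcard : (Finset.univ.filter (fun i => y i ≠ 0)).card ≤ J)
    (hb : ∀ i, |y i| ≤ μ) : ‖y‖ ≤ Real.sqrt J * μ := by
  rw [EuclideanSpace.norm_eq, ← Real.sqrt_sq hμ, ← Real.sqrt_mul (Nat.cast_nonneg J)]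
  apply Real.sqrt_le_sqrt
  have h1 : ∑ i, ‖y i‖ ^ 2
      = ∑ i ∈ Finset.univ.filter (fun i => y i ≠ 0), ‖y i‖ ^ 2 := by
    refine (Finset.sum_filter_of_ne ?_).symm
    intro i _ h
    intro h0
    exact h (by simp [h0])
  rw [h1]
  calc ∑ i ∈ Finset.univ.filter (fun i => y i ≠ 0), ‖y i‖ ^ 2
      ≤ (Finset.univ.filter (fun i => y i ≠ 0)).card • (μ ^ 2) := by
        apply Finset.sum_le_card_nsmul
        intro i _
        rw [Real.norm_eq_abs, sq_abs, ← sq_abs]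
        exact pow_le_pow_left₀ (abs_nonneg _) (hb i) 2
    _ ≤ (J : ℝ) * μ ^ 2 := by
        rw [nsmul_eq_mul]
        exact mul_le_mul_of_nonneg_right (by exact_mod_cast hcard) (sq_nonneg μ)

/-- Key upper bound: `‖Φ y‖ ≤ (1+δ)(√J μ + ‖y‖₁/√J)` whenever `|y i| ≤ μ` for all i. -/
lemma lemB {N M : ℕ} (J : ℕ) (hJ : 1 ≤ J) (δ : ℝ) (hδ0 : 0 ≤ δ)
    (Φ : EuclideanSpace ℝ (Fin N) →ₗ[ℝ] EuclideanSpace ℝ (Fin M))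
    (hRIP : ∀ x : EuclideanSpace ℝ (Fin N), {i | x i ≠ 0}.ncard ≤ J →
      (1 - δ) * ‖x‖ ≤ ‖Φ x‖ ∧ ‖Φ x‖ ≤ (1 + δ) * ‖x‖) :
    ∀ (n : ℕ) (y : EuclideanSpace ℝ (Fin N)),
      (Finset.univ.filter (fun i => y i ≠ 0)).card ≤ n →
      ∀ μ : ℝ, 0 ≤ μ → (∀ i, |y i| ≤ μ) →
      ‖Φ y‖ ≤ (1 + δ) * (Real.sqrt J * μ + (∑ i, |y i|) / Real.sqrt J) := by
  have hs0 : (0:ℝ) < Real.sqrt J := Real.sqrt_pos.mpr (by exact_mod_cast Nat.lt_of_lt_of_le Nat.zero_lt_one hJ)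
  have hsum_nonneg : ∀ y : EuclideanSpace ℝ (Fin N), (0:ℝ) ≤ ∑ i, |y i| :=
    fun y => Finset.sum_nonneg fun i _ => abs_nonneg _
  -- sparse case, used repeatedly
  have sparse : ∀ (y : EuclideanSpace ℝ (Fin N)),
      (Finset.univ.filter (fun i => y i ≠ 0)).card ≤ J →
      ∀ μ : ℝ, 0 ≤ μ → (∀ i, |y i| ≤ μ) →
      ‖Φ y‖ ≤ (1 + δ) * (Real.sqrt J * μ + (∑ i, |y i|) / Real.sqrt J) := by
    intro y hcard μ hμ hb
    have h1 : ‖Φ y‖ ≤ (1 + δ) * ‖y‖ := by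
      refine (hRIP y ?_).2
      rw [ncard_eq_card_filter]; exact hcard
    have h2 : ‖y‖ ≤ Real.sqrt J * μ := sparse_norm_le J y μ hμ hcard hb
    have h3 : (0:ℝ) ≤ (∑ i, |y i|) / Real.sqrt J := div_nonneg (hsum_nonneg y) hs0.le
    nlinarith [norm_nonneg (Φ y)]
  intro n
  induction n with
  | zero =>
    intro y hcard μ hμ hb
    exact sparse y (le_trans hcard (Nat.zero_le J)) μ hμ hb
  | succ n ih =>
    intro y hcard μ hμ hb
    by_cases hle : (Finset.univ.filter (fun i => y i ≠ 0)).card ≤ J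
    · exact sparse y hle μ hμ hb
    push_neg at hle
    set S := Finset.univ.filter (fun i => y i ≠ 0) with hS
    obtain ⟨T, hTs, hTc, hTop⟩ := exists_topK (fun i => |y i|) J S hle.le
    set z : EuclideanSpace ℝ (Fin N) := WithLp.toLp 2 fun i => if i ∈ T then y i else 0 with hz
    set w : EuclideanSpace ℝ (Fin N) := WithLp.toLp 2 fun i => if i ∈ T then 0 else y i with hw
    have hyzw : y = z + w := by
      ext i
      show y i = z i + w i
      by_cases h : i ∈ T <;> simp [hz, hw, h]
    -- z is sparse
    have hzcard : (Finset.univ.filter (fun i => z i ≠ 0)).card ≤ J := by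
      rw [← hTc]
      apply Finset.card_le_card
      intro i hi
      simp only [Finset.mem_filter] at hi
      by_contra h
      exact hi.2 (by simp [hz, h])
    have hzb : ∀ i, |z i| ≤ μ := by
      intro i
      by_cases h : i ∈ T <;> simp [hz, h, hb i, hμ]
    have hΦz : ‖Φ z‖ ≤ (1 + δ) * (Real.sqrt J * μ) := by
      have h1 : ‖Φ z‖ ≤ (1 + δ) * ‖z‖ := by
        refine (hRIP z ?_).2
        rw [ncard_eq_card_filter]; exact hzcard
      have h2 : ‖z‖ ≤ Real.sqrt J * μ := sparse_norm_le J z μ hμ hzcard hzb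
      nlinarith [norm_nonneg (Φ z)]
    -- w has smaller support
    have hwcard : (Finset.univ.filter (fun i => w i ≠ 0)).card ≤ n := by
      have hsub : Finset.univ.filter (fun i => w i ≠ 0) ⊆ S \ T := by
        intro i hi
        simp only [Finset.mem_filter] at hi
        rw [Finset.mem_sdiff]
        constructor
        · rw [hS, Finset.mem_filter]
          refine ⟨Finset.mem_univ i, ?_⟩
          intro h0
          exact hi.2 (by simp [hw, h0])
        · intro hT
          exact hi.2 (by simp [hw, hT])
      calc (Finset.univ.filter (fun i => w i ≠ 0)).card ≤ (S \ T).card :=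
            Finset.card_le_card hsub
        _ = S.card - T.card := Finset.card_sdiff_of_subset hTs
        _ ≤ n := by omega
    -- bound on entries of w
    set μ' : ℝ := (∑ i ∈ T, |y i|) / J with hμ'
    have hμ'0 : 0 ≤ μ' := div_nonneg (Finset.sum_nonneg fun i _ => abs_nonneg _) (Nat.cast_nonneg J)
    have hwb : ∀ i, |w i| ≤ μ' := by
      intro j
      by_cases hT : j ∈ T
      · simp [hw, hT, hμ'0]
      by_cases hSj : j ∈ S
      · have h1 : ∀ i ∈ T, |y j| ≤ |y i| := fun i hi => hTop i hi j hSj hT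
        have h2 : (T.card : ℝ) * |y j| ≤ ∑ i ∈ T, |y i| := by
          calc (T.card : ℝ) * |y j| = ∑ _i ∈ T, |y j| := by
                rw [Finset.sum_const, nsmul_eq_mul]
            _ ≤ ∑ i ∈ T, |y i| := Finset.sum_le_sum h1
        have hwj : w j = y j := by simp [hw, hT]
        rw [hwj, hμ']
        rw [hTc] at h2
        have hJ0 : (0:ℝ) < J := by exact_mod_cast Nat.lt_of_lt_of_le Nat.zero_lt_one hJ
        rw [le_div_iff₀ hJ0]
        linarith
      · have : y j = 0 := by
          by_contra h
          exact hSj (by rw [hS, Finset.mem_filter]; exact ⟨Finset.mem_univ j, h⟩)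
        simp [hw, hT, this, hμ'0]
    have hΦw := ih w hwcard μ' hμ'0 hwb
    -- sums
    have hsumz : ∑ i, |z i| = ∑ i ∈ T, |y i| := by
      have habs : ∀ i, |z i| = if i ∈ T then |y i| else 0 := by
        intro i; by_cases h : i ∈ T <;> simp [hz, h]
      simp_rw [habs]
      rw [Finset.sum_ite_mem, Finset.univ_inter]
    have hsumw : ∑ i, |w i| = (∑ i, |y i|) - ∑ i ∈ T, |y i| := by
      have : ∑ i, |y i| = ∑ i, |z i| + ∑ i, |w i| := by
        rw [← Finset.sum_add_distrib]
        apply Finset.sum_congr rfl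
        intro i _
        by_cases h : i ∈ T <;> simp [hz, hw, h]
      rw [this, hsumz]; ring
    -- √J * μ' = (∑_T |y|)/√J
    have hkey : Real.sqrt J * μ' = (∑ i ∈ T, |y i|) / Real.sqrt J := by
      rw [hμ']
      field_simp
      rw [Real.sq_sqrt (Nat.cast_nonneg J), mul_comm]
    have htri : ‖Φ y‖ ≤ ‖Φ z‖ + ‖Φ w‖ := by
      rw [hyzw, map_add]; exact norm_add_le _ _
    rw [hsumw] at hΦw
    rw [hkey] at hΦw
    have : (1 + δ) * (Real.sqrt J * μ) + (1 + δ) *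
        ((∑ i ∈ T, |y i|) / Real.sqrt J + ((∑ i, |y i|) - ∑ i ∈ T, |y i|) / Real.sqrt J)
        = (1 + δ) * (Real.sqrt J * μ + (∑ i, |y i|) / Real.sqrt J) := by
      field_simp
      ring
    linarith [htri, hΦz, hΦw]



/-- RIP implies RWP: if `Φ` satisfies the (no-squares) `(J,δ)`-restricted
isometry property with `0 ≤ δ < 1/3`, then `Φ` satisfies the `(3/√J, 1/3 − δ)`-robust
width property over `B₁`. -/
theorem stmt12 {N M : ℕ} (J : ℕ) (hJ : 1 ≤ J) (δ : ℝ) (hδ0 : 0 ≤ δ) (hδ : δ < 1 / 3)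
    (Φ : EuclideanSpace ℝ (Fin N) →ₗ[ℝ] EuclideanSpace ℝ (Fin M))
    (hRIP : ∀ x : EuclideanSpace ℝ (Fin N), {i | x i ≠ 0}.ncard ≤ J →
      (1 - δ) * ‖x‖ ≤ ‖Φ x‖ ∧ ‖Φ x‖ ≤ (1 + δ) * ‖x‖) :
    ∀ x : EuclideanSpace ℝ (Fin N), ‖Φ x‖ < (1 / 3 - δ) * ‖x‖ →
      ‖x‖ ≤ (3 / Real.sqrt J) * ∑ i, |x i| := by
  intro x hx
  by_cases hx0 : x = 0
  · subst hx0
    simp only [norm_zero]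
    positivity
  have hxpos : 0 < ‖x‖ := norm_pos_iff.mpr hx0
  by_contra hcon
  push_neg at hcon
  have hs0 : (0:ℝ) < Real.sqrt J :=
    Real.sqrt_pos.mpr (by exact_mod_cast Nat.lt_of_lt_of_le Nat.zero_lt_one hJ)
  have hsJ : Real.sqrt J * Real.sqrt J = (J:ℝ) := Real.mul_self_sqrt (Nat.cast_nonneg J)
  set s := Real.sqrt J with hsdef
  set L := ∑ i, |x i| with hLdef
  have hL0 : 0 ≤ L := Finset.sum_nonneg fun i _ => abs_nonneg _
  have hL : L / s < ‖x‖ / 3 := by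
    have h1 : 3 / s * L < ‖x‖ := hcon
    rw [div_lt_div_iff₀ hs0 (by norm_num : (0:ℝ) < 3)]
    have := (div_lt_iff₀ hs0).mp (by rw [div_mul_eq_mul_div] at h1; exact h1)
    linarith
  set S := Finset.univ.filter (fun i => x i ≠ 0) with hS
  by_cases hle : S.card ≤ J
  · have h1 : (1 - δ) * ‖x‖ ≤ ‖Φ x‖ := by
      refine (hRIP x ?_).1
      rw [ncard_eq_card_filter]; exact hle
    nlinarith
  push_neg at hle
  obtain ⟨T, hTs, hTc, hTop⟩ := exists_topK (fun i => |x i|) J S hle.le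
  set z : EuclideanSpace ℝ (Fin N) := WithLp.toLp 2 fun i => if i ∈ T then x i else 0 with hz
  set w : EuclideanSpace ℝ (Fin N) := WithLp.toLp 2 fun i => if i ∈ T then 0 else x i with hw
  have hyzw : x = z + w := by
    ext i
    show x i = z i + w i
    by_cases h : i ∈ T <;> simp [hz, hw, h]
  have hzcard : (Finset.univ.filter (fun i => z i ≠ 0)).card ≤ J := by
    rw [← hTc]
    apply Finset.card_le_card
    intro i hi
    simp only [Finset.mem_filter] at hi
    by_contra h
    exact hi.2 (by simp [hz, h])
  -- entry bound for w
  set μ' : ℝ := (∑ i ∈ T, |x i|) / J with hμ'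
  have hμ'0 : 0 ≤ μ' := div_nonneg (Finset.sum_nonneg fun i _ => abs_nonneg _) (Nat.cast_nonneg J)
  have hwb : ∀ i, |w i| ≤ μ' := by
    intro j
    by_cases hT : j ∈ T
    · simp [hw, hT, hμ'0]
    by_cases hSj : j ∈ S
    · have h1 : ∀ i ∈ T, |x j| ≤ |x i| := fun i hi => hTop i hi j hSj hT
      have h2 : (T.card : ℝ) * |x j| ≤ ∑ i ∈ T, |x i| := by
        calc (T.card : ℝ) * |x j| = ∑ _i ∈ T, |x j| := by
              rw [Finset.sum_const, nsmul_eq_mul]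
          _ ≤ ∑ i ∈ T, |x i| := Finset.sum_le_sum h1
      have hwj : w j = x j := by simp [hw, hT]
      rw [hwj, hμ']
      rw [hTc] at h2
      have hJ0 : (0:ℝ) < J := by exact_mod_cast Nat.lt_of_lt_of_le Nat.zero_lt_one hJ
      rw [le_div_iff₀ hJ0]
      linarith
    · have : x j = 0 := by
        by_contra h
        exact hSj (by rw [hS, Finset.mem_filter]; exact ⟨Finset.mem_univ j, h⟩)
      simp [hw, hT, this, hμ'0]
  -- sums
  have hsumT_le : ∑ i ∈ T, |x i| ≤ L := by
    rw [hLdef]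
    exact Finset.sum_le_sum_of_subset_of_nonneg (Finset.subset_univ T)
      (fun i _ _ => abs_nonneg _)
  have hsumT0 : 0 ≤ ∑ i ∈ T, |x i| := Finset.sum_nonneg fun i _ => abs_nonneg _
  have hsumw : ∑ i, |w i| = L - ∑ i ∈ T, |x i| := by
    have hsumz : ∑ i, |z i| = ∑ i ∈ T, |x i| := by
      have habs : ∀ i, |z i| = if i ∈ T then |x i| else 0 := by
        intro i; by_cases h : i ∈ T <;> simp [hz, h]
      simp_rw [habs]
      rw [Finset.sum_ite_mem, Finset.univ_inter]
    have : L = ∑ i, |z i| + ∑ i, |w i| := by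
      rw [hLdef, ← Finset.sum_add_distrib]
      apply Finset.sum_congr rfl
      intro i _
      by_cases h : i ∈ T <;> simp [hz, hw, h]
    rw [this, hsumz]; ring
  -- upper bound on ‖Φ w‖ via lemB
  have hΦw := lemB J hJ δ hδ0 Φ hRIP (Finset.univ.filter (fun i => w i ≠ 0)).card w
    le_rfl μ' hμ'0 hwb
  rw [← hsdef] at hΦw
  have hkey : s * μ' = (∑ i ∈ T, |x i|) / s := by
    rw [hμ']
    field_simp
    rw [pow_two, hsJ, mul_comm]
  have hΦw' : ‖Φ w‖ ≤ (1 + δ) * (L / s) := by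
    rw [hsumw, hkey] at hΦw
    have heq : (∑ i ∈ T, |x i|) / s + (L - ∑ i ∈ T, |x i|) / s = L / s := by
      field_simp
      ring
    rw [heq] at hΦw
    exact hΦw
  -- ‖w‖ ≤ L / s
  have hwnorm : ‖w‖ ≤ L / s := by
    rw [EuclideanSpace.norm_eq]
    rw [← Real.sqrt_sq (div_nonneg hL0 hs0.le)]
    apply Real.sqrt_le_sqrt
    have h1 : ∑ i, ‖w i‖ ^ 2 ≤ μ' * ∑ i, |w i| := by
      rw [Finset.mul_sum]
      apply Finset.sum_le_sum
      intro i _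
      rw [Real.norm_eq_abs, sq_abs, ← sq_abs]
      calc |w i| ^ 2 = |w i| * |w i| := sq (|w i|) ▸ by ring
        _ ≤ μ' * |w i| := mul_le_mul_of_nonneg_right (hwb i) (abs_nonneg _)
    have h2 : (L / s) ^ 2 = L ^ 2 / (J:ℝ) := by
      rw [div_pow, pow_two s, hsJ]
    rw [h2]
    have hJ0 : (0:ℝ) < J := by exact_mod_cast Nat.lt_of_lt_of_le Nat.zero_lt_one hJ
    have h3 : μ' * (L - ∑ i ∈ T, |x i|) ≤ L ^ 2 / (J:ℝ) := by
      rw [hμ', div_mul_eq_mul_div, div_le_div_iff₀ hJ0 hJ0]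
      have h0 : 0 ≤ L - ∑ i ∈ T, |x i| := by
        rw [← hsumw]; exact Finset.sum_nonneg fun i _ => abs_nonneg _
      have hq1 : (∑ i ∈ T, |x i|) * (L - ∑ i ∈ T, |x i|) ≤ L ^ 2 := by
        nlinarith [sq_nonneg (2 * (∑ i ∈ T, |x i|) - L)]
      exact mul_le_mul_of_nonneg_right hq1 hJ0.le
    calc ∑ i, ‖w i‖ ^ 2 ≤ μ' * ∑ i, |w i| := h1
      _ = μ' * (L - ∑ i ∈ T, |x i|) := by rw [hsumw]
      _ ≤ L ^ 2 / (J:ℝ) := h3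
  -- lower bound on ‖Φ z‖
  have hΦz : (1 - δ) * ‖z‖ ≤ ‖Φ z‖ := by
    refine (hRIP z ?_).1
    rw [ncard_eq_card_filter]; exact hzcard
  have hznorm : ‖x‖ - ‖w‖ ≤ ‖z‖ := by
    have := norm_add_le z w
    rw [← hyzw] at this
    linarith
  have htri : ‖Φ z‖ ≤ ‖Φ x‖ + ‖Φ w‖ := by
    have : Φ z = Φ x - Φ w := by rw [hyzw, map_add]; abel
    rw [this]
    exact norm_sub_le _ _
  have hδ1 : (0:ℝ) < 1 - δ := by linarith
  have hchain : (1 - δ) * (‖x‖ - L / s) ≤ (1 - δ) * ‖z‖ := by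
    apply mul_le_mul_of_nonneg_left _ hδ1.le
    linarith
  linarith [hL, hx, hΦw', htri, hΦz, hchain, hxpos]
end

section
/- Let H be a finite-dimensional real normed space with norm ‖·‖♯, let a ∈ H be nonzero, and let D := {y ∈ H : ∃ t > 0 with ‖a + ty‖♯ ≤ ‖a‖♯} be the descent cone of ‖·‖♯ at a. Let v ∈ H satisfy ‖v‖♯ = ‖a‖♯ and v − a ∈ cl(H \ D), the topological closure of the complement of D. Then for every c ≥ 0, ‖a + c·v‖♯ = ‖a‖♯ + ‖c·v‖♯ = ‖a‖♯ + c‖v‖♯. -/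
/-- Let `D` be the descent cone of the norm at a nonzero point `a`.
If `‖v‖ = ‖a‖` and `v − a` lies in the closure of the complement of `D`, then
`‖a + c·v‖ = ‖a‖ + ‖c·v‖ = ‖a‖ + c‖v‖` for every `c ≥ 0`. -/
theorem stmt19 {H : Type*} [NormedAddCommGroup H] [NormedSpace ℝ H]
    [FiniteDimensional ℝ H]
    (a : H) (ha : a ≠ 0)
    (D : Set H) (hD : D = {y : H | ∃ t : ℝ, 0 < t ∧ ‖a + t • y‖ ≤ ‖a‖})
    (v : H) (hv : ‖v‖ = ‖a‖) (hva : v - a ∈ closure Dᶜ) :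
    ∀ c : ℝ, 0 ≤ c →
      ‖a + c • v‖ = ‖a‖ + ‖c • v‖ ∧ ‖a + c • v‖ = ‖a‖ + c * ‖v‖ := by
  intro c hc
  rcases eq_or_lt_of_le hc with h0 | hc0
  · subst h0; simp
  -- key: for each t > 0, ‖a + t • (v-a)‖ ≥ ‖a‖
  have key : ∀ t : ℝ, 0 < t → ‖a‖ ≤ ‖a + t • (v - a)‖ := by
    intro t ht
    have hclosed : IsClosed {y : H | ‖a‖ ≤ ‖a + t • y‖} := by
      have : Continuous fun y : H => ‖a + t • y‖ := continuous_const.add (continuous_const_smul t) |>.norm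
      exact isClosed_le continuous_const this
    have hsub : Dᶜ ⊆ {y : H | ‖a‖ ≤ ‖a + t • y‖} := by
      intro y hy
      rw [hD] at hy
      simp only [Set.mem_compl_iff, Set.mem_setOf_eq, not_exists] at hy
      have := hy t
      push_neg at this
      exact (this ht).le
    exact (closure_minimal hsub hclosed) hva
  set t : ℝ := c / (1 + c) with htdef
  have h1c : (0:ℝ) < 1 + c := by linarith
  have ht0 : 0 < t := div_pos hc0 h1c
  have ht1 : t ≤ 1 := by
    rw [div_le_one h1c]; linarith
  -- equality ‖a + t • (v - a)‖ = ‖a‖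
  have hle : ‖a + t • (v - a)‖ ≤ ‖a‖ := by
    have heq : a + t • (v - a) = (1 - t) • a + t • v := by
      module
    rw [heq]
    calc ‖(1 - t) • a + t • v‖ ≤ ‖(1 - t) • a‖ + ‖t • v‖ := norm_add_le _ _
      _ = (1 - t) * ‖a‖ + t * ‖v‖ := by
          rw [norm_smul, norm_smul, Real.norm_eq_abs, Real.norm_eq_abs,
            abs_of_nonneg (by linarith), abs_of_nonneg ht0.le]
      _ = ‖a‖ := by rw [hv]; ring
  have heq : ‖a + t • (v - a)‖ = ‖a‖ := le_antisymm hle (key t ht0)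
  -- a + c • v = (1+c) • (a + t • (v - a))
  have hrepr : a + c • v = (1 + c) • (a + t • (v - a)) := by
    have : (1 + c) • (t • (v - a)) = c • (v - a) := by
      rw [smul_smul]
      congr 1
      rw [htdef]
      field_simp
    rw [smul_add, this]
    module
  have hnorm : ‖a + c • v‖ = (1 + c) * ‖a‖ := by
    rw [hrepr, norm_smul, Real.norm_eq_abs, abs_of_pos h1c, heq]
  constructor
  · rw [hnorm, norm_smul, Real.norm_eq_abs, abs_of_nonneg hc, hv]; ring
  · rw [hnorm, hv]; ring
end
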